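/- arXiv:2206.01027 — 3 statements merged into one kernel-verified Lean document; each statement's English description precedes it below -/
import Mathlib

section
/- For any multisegment α, n_{α~} ≥ L_α and n_α ≥ L_{α~}: the number of segments of the Zelevinsky involution of α is at least the maximal length of a segment of α, and the number of segments of α is at least the maximal length of a segment of α~. -/
/-- A finite multiset of integer pairs `(b, e)` is a multisegment if each pair
satisfies `b ≤ e`; the pair `(b, e)` encodes the segment `{b, b+1, …, e}`. -/
def IsMultisegment (α : Multiset (ℤ × ℤ)) : Prop := ∀ p ∈ α, p.1 ≤ p.2

/-- The length `e - b + 1` of the segment `(b, e)`. -/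
def segLen (p : ℤ × ℤ) : ℕ := (p.2 - p.1 + 1).toNat

/-- `L_α`: the maximal length of a segment of `α`. -/
def maxLen (α : Multiset (ℤ × ℤ)) : ℕ := (α.map segLen).sup

/-- The union of the segments `p` and `q` is a segment strictly containing both. -/
def Linked (p q : ℤ × ℤ) : Prop :=
  q.1 ≤ p.2 + 1 ∧ p.1 ≤ q.2 + 1 ∧
    (min p.1 q.1, max p.2 q.2) ≠ p ∧ (min p.1 q.1, max p.2 q.2) ≠ q

/-- The intersection of two segments, as a multiset (empty if the segments are disjoint). -/
def interMS (p q : ℤ × ℤ) : Multiset (ℤ × ℤ) :=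
  if max p.1 q.1 ≤ min p.2 q.2 then {(max p.1 q.1, min p.2 q.2)} else 0

/-- An elementary operation replaces two segments whose union is a segment strictly
containing both by their union and (if nonempty) their intersection. -/
def ElemStep (α β : Multiset (ℤ × ℤ)) : Prop :=
  ∃ p q rest, α = p ::ₘ q ::ₘ rest ∧ Linked p q ∧
    β = (min p.1 q.1, max p.2 q.2) ::ₘ (interMS p q + rest)

/-- The partial order on multisegments: `α ≤ β` iff `β` is obtained from `α` by
a finite (possibly empty) sequence of elementary operations. -/
def msLE (α β : Multiset (ℤ × ℤ)) : Prop := Relation.ReflTransGen ElemStep α β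

/-- Mœglin–Waldspurger: the chain `Δ_e, Δ_{e-1}, …, Δ_m` starting from `Δ`,
where at each step we pass to a segment of `α` with end value one less, preceding
the current segment, and with maximal base value (fuel-driven recursion). -/
def mwChainAux : ℕ → Multiset (ℤ × ℤ) → ℤ × ℤ → List (ℤ × ℤ)
  | 0, _, Δ => [Δ]
  | n + 1, α, Δ =>
    let s := ((α.filter (fun p => p.2 = Δ.2 - 1 ∧ p.1 < Δ.1)).map Prod.fst).toFinset
    if h : s.Nonempty then Δ :: mwChainAux n α (s.max' h, Δ.2 - 1) else [Δ]

/-- The Mœglin–Waldspurger chain `Δ_e, Δ_{e-1}, …, Δ_m` of `α`: here `e` is the largest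
end value of a segment of `α` and `Δ_e` has maximal base value among segments with
end value `e`. -/
def mwChain (α : Multiset (ℤ × ℤ)) : List (ℤ × ℤ) :=
  let ends := (α.map Prod.snd).toFinset
  if h : ends.Nonempty then
    let e := ends.max' h
    let bases := ((α.filter (fun p => p.2 = e)).map Prod.fst).toFinset
    if hb : bases.Nonempty then mwChainAux α.card α (bases.max' hb, e) else []
  else []

/-- `M(α) = [m, e]`. -/
def mwSegment (α : Multiset (ℤ × ℤ)) : ℤ × ℤ :=
  (((mwChain α).getLastD (0, 0)).2, ((mwChain α).headD (0, 0)).2)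

/-- Delete the end value from a segment, discarding the segment if it becomes empty. -/
def mwShrink (p : ℤ × ℤ) : Multiset (ℤ × ℤ) :=
  if p.1 ≤ p.2 - 1 then {(p.1, p.2 - 1)} else 0

/-- `α ∖ M(α)`: delete the integer `i` from the segment `Δ_i` for each `m ≤ i ≤ e`. -/
def mwResidual (α : Multiset (ℤ × ℤ)) : Multiset (ℤ × ℤ) :=
  (α - ↑(mwChain α)) + (↑(mwChain α) : Multiset (ℤ × ℤ)).bind mwShrink

/-- The total number of integers occurring in the segments of `α` (with multiplicity). -/
def msSize (α : Multiset (ℤ × ℤ)) : ℕ := (α.map segLen).sum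

def tildeAux : ℕ → Multiset (ℤ × ℤ) → Multiset (ℤ × ℤ)
  | 0, _ => 0
  | n + 1, α => if α = 0 then 0 else mwSegment α ::ₘ tildeAux n (mwResidual α)

/-- The Zelevinsky involution `α ↦ α~`, computed by the Mœglin–Waldspurger algorithm:
`∅~ = ∅` and `α~ = {M(α)} ⊎ (α ∖ M(α))~`. -/
def tilde (α : Multiset (ℤ × ℤ)) : Multiset (ℤ × ℤ) := tildeAux (msSize α) α

/-- The simple multisegment `{[b, e], [b+1, e+1], …, [b+n-1, e+n-1]}`. -/
def simpleMS (b e : ℤ) (n : ℕ) : Multiset (ℤ × ℤ) :=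
  (Multiset.range n).map fun k => (b + (k : ℤ), e + (k : ℤ))

/-- A multisegment is simple if it has the form `{[b,e], [b+1,e+1], …, [b+n-1, e+n-1]}`
with `b ≤ e` and `n ≥ 1`. -/
def IsSimple (α : Multiset (ℤ × ℤ)) : Prop :=
  ∃ (b e : ℤ) (n : ℕ), b ≤ e ∧ 1 ≤ n ∧ α = simpleMS b e n

/-- The union `⋃_{Δ ∈ α} Δ` of the segments of `α`, as a set of integers. -/
def unionSet (α : Multiset (ℤ × ℤ)) : Set ℤ := {x | ∃ p ∈ α, p.1 ≤ x ∧ x ≤ p.2}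

/-- `c_α`: the minimal number of segments whose union is `⋃_{Δ ∈ α} Δ`. -/
noncomputable def cNum (α : Multiset (ℤ × ℤ)) : ℕ :=
  sInf {n | ∃ β : Multiset (ℤ × ℤ), IsMultisegment β ∧ β.card = n ∧ unionSet β = unionSet α}

/-! ### Auxiliary lemmas -/

lemma mwChainAux_cons (n : ℕ) (α : Multiset (ℤ × ℤ)) (Δ : ℤ × ℤ) :
    ∃ l, mwChainAux n α Δ = Δ :: l := by
  cases n with
  | zero => exact ⟨[], rfl⟩
  | succ n =>
      rw [mwChainAux]
      split
      · exact ⟨_, rfl⟩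
      · exact ⟨[], rfl⟩

lemma mwChainAux_ne_nil (n : ℕ) (α : Multiset (ℤ × ℤ)) (Δ : ℤ × ℤ) :
    mwChainAux n α Δ ≠ [] := by
  obtain ⟨l, hl⟩ := mwChainAux_cons n α Δ
  simp [hl]

lemma mwChainAux_snd_le (n : ℕ) (α : Multiset (ℤ × ℤ)) (Δ : ℤ × ℤ) :
    ∀ p ∈ mwChainAux n α Δ, p.2 ≤ Δ.2 := by
  induction n generalizing Δ with
  | zero => intro p hp; simp only [mwChainAux, List.mem_singleton] at hp; simp [hp]
  | succ n ih =>
      intro p hp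
      rw [mwChainAux] at hp
      split at hp
      · rcases List.mem_cons.1 hp with h | h
        · simp [h]
        · have := ih _ _ h
          simp only at this
          omega
      · simp only [List.mem_singleton] at hp; simp [hp]

lemma mwChainAux_mem (n : ℕ) (α : Multiset (ℤ × ℤ)) (Δ : ℤ × ℤ) (hΔ : Δ ∈ α) :
    ∀ p ∈ mwChainAux n α Δ, p ∈ α := by
  induction n generalizing Δ with
  | zero => intro p hp; simp only [mwChainAux, List.mem_singleton] at hp; simpa [hp]
  | succ n ih =>
      intro p hp
      rw [mwChainAux] at hp
      split at hp
      · rcases List.mem_cons.1 hp with h | h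
        · simpa [h]
        · rename_i hs
          have hmem : _ ∈ _ := Finset.max'_mem _ hs
          rw [Multiset.mem_toFinset, Multiset.mem_map] at hmem
          obtain ⟨q, hq, hq1⟩ := hmem
          rw [Multiset.mem_filter] at hq
          have hqα : q ∈ α := hq.1
          have hqe : (((Multiset.map Prod.fst (Multiset.filter (fun p => p.2 = Δ.2 - 1 ∧ p.1 < Δ.1) α)).toFinset.max' hs, Δ.2 - 1) : ℤ × ℤ) ∈ α := by
            rw [← hq1, ← hq.2.1]
            simpa using hqα
          exact ih _ hqe p h
      · simp only [List.mem_singleton] at hp; simpa [hp]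

lemma mwChainAux_nodup (n : ℕ) (α : Multiset (ℤ × ℤ)) (Δ : ℤ × ℤ) :
    (mwChainAux n α Δ).Nodup := by
  induction n generalizing Δ with
  | zero => simp [mwChainAux]
  | succ n ih =>
      rw [mwChainAux]
      split
      · refine List.nodup_cons.2 ⟨fun h => ?_, ih _⟩
        have := mwChainAux_snd_le n α _ _ h
        simp only at this
        omega
      · simp

lemma mwChainAux_getLastD_snd (n : ℕ) (α : Multiset (ℤ × ℤ)) (Δ : ℤ × ℤ) (d : ℤ × ℤ) :
    ((mwChainAux n α Δ).getLastD d).2 = Δ.2 - (mwChainAux n α Δ).length + 1 := by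
  induction n generalizing Δ d with
  | zero => simp [mwChainAux]
  | succ n ih =>
      rw [mwChainAux]
      split
      · rw [List.getLastD_cons, List.length_cons]
        rw [ih]
        push_cast
        ring
      · simp

lemma mwChain_spec (α : Multiset (ℤ × ℤ)) (hα : α ≠ 0) :
    ∃ Δ, Δ ∈ α ∧ mwChain α = mwChainAux (Multiset.card α) α Δ := by
  obtain ⟨p, hp⟩ := Multiset.exists_mem_of_ne_zero hα
  have hends : ((α.map Prod.snd).toFinset).Nonempty :=
    ⟨p.2, by simp only [Multiset.mem_toFinset, Multiset.mem_map]; exact ⟨p, hp, rfl⟩⟩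
  rw [mwChain]
  rw [dif_pos hends]
  set e := ((α.map Prod.snd).toFinset).max' hends with he
  have hemem : e ∈ (α.map Prod.snd).toFinset := Finset.max'_mem _ _
  rw [Multiset.mem_toFinset, Multiset.mem_map] at hemem
  obtain ⟨q, hq, hq2⟩ := hemem
  have hbases : (((α.filter (fun p => p.2 = e)).map Prod.fst).toFinset).Nonempty := by
    refine ⟨q.1, ?_⟩
    simp only [Multiset.mem_toFinset, Multiset.mem_map]
    exact ⟨q, Multiset.mem_filter.2 ⟨hq, hq2⟩, rfl⟩
  rw [dif_pos hbases]
  set b := (((α.filter (fun p => p.2 = e)).map Prod.fst).toFinset).max' hbases with hb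
  have hbmem : b ∈ ((α.filter (fun p => p.2 = e)).map Prod.fst).toFinset := Finset.max'_mem _ _
  rw [Multiset.mem_toFinset, Multiset.mem_map] at hbmem
  obtain ⟨r, hr, hr1⟩ := hbmem
  rw [Multiset.mem_filter] at hr
  refine ⟨(b, e), ?_, rfl⟩
  have : r = (b, e) := Prod.ext hr1 hr.2
  rw [← this]
  exact hr.1

lemma mwChain_mem (α : Multiset (ℤ × ℤ)) (hα : α ≠ 0) :
    ∀ p ∈ mwChain α, p ∈ α := by
  obtain ⟨Δ, hΔ, hc⟩ := mwChain_spec α hα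
  rw [hc]; exact mwChainAux_mem _ _ _ hΔ

lemma mwChain_nodup (α : Multiset (ℤ × ℤ)) (hα : α ≠ 0) :
    (mwChain α).Nodup := by
  obtain ⟨Δ, hΔ, hc⟩ := mwChain_spec α hα
  rw [hc]; exact mwChainAux_nodup _ _ _

lemma mwChain_ne_nil (α : Multiset (ℤ × ℤ)) (hα : α ≠ 0) :
    mwChain α ≠ [] := by
  obtain ⟨Δ, hΔ, hc⟩ := mwChain_spec α hα
  rw [hc]; exact mwChainAux_ne_nil _ _ _

lemma mwChain_le (α : Multiset (ℤ × ℤ)) (hα : α ≠ 0) :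
    (↑(mwChain α) : Multiset (ℤ × ℤ)) ≤ α := by
  rw [Multiset.le_iff_subset (Multiset.coe_nodup.2 (mwChain_nodup α hα))]
  intro p hp
  exact mwChain_mem α hα p (by exact_mod_cast hp)

lemma segLen_mwSegment (α : Multiset (ℤ × ℤ)) (hα : α ≠ 0) :
    segLen (mwSegment α) = (mwChain α).length := by
  obtain ⟨Δ, hΔ, hc⟩ := mwChain_spec α hα
  obtain ⟨l, hl⟩ := mwChainAux_cons (Multiset.card α) α Δ
  rw [mwSegment, segLen, hc]
  have hlast := mwChainAux_getLastD_snd (Multiset.card α) α Δ (0, 0)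
  rw [hlast, hl, List.headD_cons]
  have hlen : (1 : ℤ) ≤ ((mwChainAux (Multiset.card α) α Δ).length : ℤ) := by
    have := mwChainAux_ne_nil (Multiset.card α) α Δ
    have : 0 < (mwChainAux (Multiset.card α) α Δ).length := List.length_pos_iff.2 this
    exact_mod_cast this
  rw [hl] at hlen
  dsimp only
  omega

lemma msSize_add (a b : Multiset (ℤ × ℤ)) : msSize (a + b) = msSize a + msSize b := by
  simp [msSize]

lemma segLen_pos (p : ℤ × ℤ) (h : p.1 ≤ p.2) : 1 ≤ segLen p := by
  rw [segLen]; omega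

lemma msSize_mwShrink (p : ℤ × ℤ) : msSize (mwShrink p) + 1 = segLen p + (if p.1 ≤ p.2 then 0 else 1) := by
  rw [mwShrink]
  split_ifs with h1 h2 h2 <;> simp [msSize, segLen] <;> omega

lemma card_mwShrink (p : ℤ × ℤ) : Multiset.card (mwShrink p) ≤ 1 := by
  rw [mwShrink]; split_ifs <;> simp

lemma msSize_mwResidual (α : Multiset (ℤ × ℤ)) (hms : IsMultisegment α) (hα : α ≠ 0) :
    msSize α = msSize (mwResidual α) + (mwChain α).length := by
  have hle := mwChain_le α hα
  have hsplit : α = (α - ↑(mwChain α)) + ↑(mwChain α) := (tsub_add_cancel_of_le hle).symm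
  have hmem := mwChain_mem α hα
  conv_lhs => rw [hsplit]
  rw [msSize_add, mwResidual, msSize_add]
  have : ∀ l : List (ℤ × ℤ), (∀ p ∈ l, p.1 ≤ p.2) →
      msSize (↑l : Multiset (ℤ × ℤ)) = msSize ((↑l : Multiset (ℤ × ℤ)).bind mwShrink) + l.length := by
    intro l
    induction l with
    | nil => intro _; simp [msSize]
    | cons a l ih =>
        intro h
        have ha : a.1 ≤ a.2 := h a List.mem_cons_self
        have hml := msSize_mwShrink a
        rw [if_pos ha] at hml
        have : (↑(a :: l) : Multiset (ℤ × ℤ)) = a ::ₘ ↑l := rfl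
        rw [this, Multiset.cons_bind, msSize_add]
        have hms' : msSize (a ::ₘ ↑l) = segLen a + msSize (↑l : Multiset (ℤ × ℤ)) := by
          simp [msSize]
        rw [hms', ih (fun p hp => h p (List.mem_cons_of_mem a hp)), List.length_cons]
        omega
  have h2 := this (mwChain α) (fun p hp => hms p (hmem p hp))
  omega

lemma card_mwResidual (α : Multiset (ℤ × ℤ)) (hα : α ≠ 0) :
    Multiset.card (mwResidual α) ≤ Multiset.card α := by
  have hle := mwChain_le α hα
  have hsplit : α = (α - ↑(mwChain α)) + ↑(mwChain α) := (tsub_add_cancel_of_le hle).symm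
  rw [mwResidual]
  conv_rhs => rw [hsplit]
  rw [Multiset.card_add, Multiset.card_add]
  have : Multiset.card ((↑(mwChain α) : Multiset (ℤ × ℤ)).bind mwShrink) ≤
      Multiset.card (↑(mwChain α) : Multiset (ℤ × ℤ)) := by
    rw [Multiset.card_bind]
    calc ((↑(mwChain α) : Multiset (ℤ × ℤ)).map fun p => Multiset.card (mwShrink p)).sum
        ≤ ((↑(mwChain α) : Multiset (ℤ × ℤ)).map fun _ => 1).sum := by
          apply Multiset.sum_map_le_sum_map
          intro p _; exact card_mwShrink p
      _ = Multiset.card (↑(mwChain α) : Multiset (ℤ × ℤ)) := by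
          simp [Multiset.map_const']
  omega

lemma isMultisegment_mwResidual (α : Multiset (ℤ × ℤ)) (hms : IsMultisegment α) :
    IsMultisegment (mwResidual α) := by
  intro p hp
  rw [mwResidual, Multiset.mem_add] at hp
  rcases hp with hp | hp
  · exact hms p (Multiset.mem_of_le (Multiset.sub_le_self _ _) hp)
  · rw [Multiset.mem_bind] at hp
    obtain ⟨q, _, hq⟩ := hp
    rw [mwShrink] at hq
    split_ifs at hq with h
    · simp only [Multiset.mem_singleton] at hq
      subst hq; exact h
    · simp at hq

lemma maxLen_le_iff (α : Multiset (ℤ × ℤ)) (k : ℕ) :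
    maxLen α ≤ k ↔ ∀ p ∈ α, segLen p ≤ k := by
  rw [maxLen, Multiset.sup_le]
  constructor
  · intro h p hp; exact h _ (Multiset.mem_map_of_mem _ hp)
  · intro h b hb
    rw [Multiset.mem_map] at hb
    obtain ⟨p, hp, rfl⟩ := hb
    exact h p hp

lemma le_maxLen (α : Multiset (ℤ × ℤ)) (p : ℤ × ℤ) (hp : p ∈ α) : segLen p ≤ maxLen α :=
  Multiset.le_sup (Multiset.mem_map_of_mem _ hp)

lemma maxLen_le_residual (α : Multiset (ℤ × ℤ)) (hα : α ≠ 0) :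
    maxLen α ≤ maxLen (mwResidual α) + 1 := by
  rw [maxLen_le_iff]
  intro p hp
  have hle := mwChain_le α hα
  have hsplit : α = (α - ↑(mwChain α)) + ↑(mwChain α) := (tsub_add_cancel_of_le hle).symm
  rw [hsplit, Multiset.mem_add] at hp
  rcases hp with hp | hp
  · have : p ∈ mwResidual α := by
      rw [mwResidual, Multiset.mem_add]; exact Or.inl hp
    have := le_maxLen _ p this
    omega
  · by_cases h : p.1 ≤ p.2 - 1
    · have hmem : (p.1, p.2 - 1) ∈ mwResidual α := by
        rw [mwResidual, Multiset.mem_add]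
        refine Or.inr (Multiset.mem_bind.2 ⟨p, hp, ?_⟩)
        rw [mwShrink, if_pos h]
        simp
      have hlen := le_maxLen _ _ hmem
      have : segLen p ≤ segLen (p.1, p.2 - 1) + 1 := by
        simp only [segLen]; omega
      omega
    · have : segLen p ≤ 1 := by rw [segLen]; omega
      omega

lemma msSize_eq_zero (α : Multiset (ℤ × ℤ)) (hms : IsMultisegment α) (h : msSize α = 0) :
    α = 0 := by
  by_contra hne
  obtain ⟨p, hp⟩ := Multiset.exists_mem_of_ne_zero hne
  have h1 : 1 ≤ segLen p := segLen_pos p (hms p hp)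
  have : segLen p ≤ msSize α := Multiset.le_sum_of_mem (Multiset.mem_map_of_mem _ hp)
  omega

lemma maxLen_zero : maxLen 0 = 0 := by simp [maxLen]

lemma tildeAux_card (n : ℕ) : ∀ α : Multiset (ℤ × ℤ), IsMultisegment α → msSize α ≤ n →
    maxLen α ≤ Multiset.card (tildeAux n α) := by
  induction n with
  | zero =>
      intro α hms h
      rw [msSize_eq_zero α hms (Nat.le_zero.1 h), maxLen_zero]
      exact Nat.zero_le _
  | succ n ih =>
      intro α hms h
      by_cases hα : α = 0
      · subst hα; rw [maxLen_zero]; exact Nat.zero_le _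
      · rw [tildeAux, if_neg hα, Multiset.card_cons]
        have hsz := msSize_mwResidual α hms hα
        have hlen : 1 ≤ (mwChain α).length :=
          List.length_pos_iff.2 (mwChain_ne_nil α hα)
        have hres := ih (mwResidual α) (isMultisegment_mwResidual α hms) (by omega)
        have := maxLen_le_residual α hα
        omega

lemma tildeAux_maxLen (n : ℕ) : ∀ α : Multiset (ℤ × ℤ), IsMultisegment α → msSize α ≤ n →
    maxLen (tildeAux n α) ≤ Multiset.card α := by
  induction n with
  | zero =>
      intro α _ _
      rw [tildeAux, maxLen_zero]
      exact Nat.zero_le _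
  | succ n ih =>
      intro α hms h
      by_cases hα : α = 0
      · rw [tildeAux, if_pos hα, maxLen_zero]; exact Nat.zero_le _
      · rw [tildeAux, if_neg hα]
        have hM : segLen (mwSegment α) ≤ Multiset.card α := by
          rw [segLen_mwSegment α hα]
          have := Multiset.card_le_card (mwChain_le α hα)
          simpa using this
        have hsz := msSize_mwResidual α hms hα
        have hlen : 1 ≤ (mwChain α).length :=
          List.length_pos_iff.2 (mwChain_ne_nil α hα)
        have hres := ih (mwResidual α) (isMultisegment_mwResidual α hms) (by omega)
        have hcard := card_mwResidual α hα
        rw [maxLen_le_iff]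
        intro p hp
        rw [Multiset.mem_cons] at hp
        rcases hp with rfl | hp
        · exact hM
        · have := le_maxLen _ p hp
          omega

/-- `n_{α~} ≥ L_α` and `n_α ≥ L_{α~}`. -/
theorem card_tilde_ge_maxLen (α : Multiset (ℤ × ℤ)) (hα : IsMultisegment α) :
    maxLen α ≤ Multiset.card (tilde α) ∧ maxLen (tilde α) ≤ Multiset.card α := by
  exact ⟨tildeAux_card (msSize α) α hα le_rfl, tildeAux_maxLen (msSize α) α hα le_rfl⟩
end

section
/- If α = {[b,e], [b+1,e+1], …, [b+n−1,e+n−1]} is a simple multisegment, then its Zelevinsky involution is α~ = {[e−k, e+n−k−1] : 0 ≤ k ≤ e−b}; in particular α~ is again a simple multisegment. -/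
lemma simpleMS_eq (b e : ℤ) (n : ℕ) :
    simpleMS b e n = (Multiset.range n).map (fun k : ℕ => (b + (k:ℤ), e + (k:ℤ))) := by
  show Multiset.map _ ((Multiset.range n).bind fun a => {((a:ℕ) : ℤ)}) = _
  rw [Multiset.bind_singleton, Multiset.map_map]
  rfl

lemma mem_simpleMS {b e : ℤ} {n : ℕ} {p : ℤ × ℤ} :
    p ∈ simpleMS b e n ↔ ∃ k : ℕ, k < n ∧ p = (b + (k:ℤ), e + (k:ℤ)) := by
  rw [simpleMS_eq]
  simp only [Multiset.mem_map, Multiset.mem_range]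
  constructor
  · rintro ⟨k, hk, rfl⟩; exact ⟨k, hk, rfl⟩
  · rintro ⟨k, hk, rfl⟩; exact ⟨k, hk, rfl⟩

lemma range_succ_cons (m : ℕ) :
    Multiset.range (m+1) = 0 ::ₘ (Multiset.range m).map Nat.succ := by
  simp [Multiset.range, List.range_succ_eq_map]

lemma map_range_rev {α : Type*} : ∀ (m : ℕ) (g : ℕ → α),
    (Multiset.range m).map (fun i => g (m - 1 - i)) = (Multiset.range m).map g
  | 0, g => rfl
  | m + 1, g => by
    conv_lhs => rw [range_succ_cons]
    conv_rhs => rw [Multiset.range_succ]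
    rw [Multiset.map_cons, Multiset.map_map, Multiset.map_cons]
    have h1 : ((fun i => g (m + 1 - 1 - i)) ∘ Nat.succ) = fun i => g (m - 1 - i) := by
      funext i
      have : m + 1 - 1 - Nat.succ i = m - 1 - i := by omega
      simp only [Function.comp_apply, this]
    rw [h1, map_range_rev m g]
    have : m + 1 - 1 - 0 = m := by omega
    rw [this]
lemma mem_S_iff (b e : ℤ) (n : ℕ) (j : ℕ) (hj : j < n) (x : ℤ) :
    x ∈ (((simpleMS b e n).filter
        (fun p : ℤ × ℤ => p.2 = e + ((j+1:ℕ):ℤ) - 1 ∧ p.1 < b + ((j+1:ℕ):ℤ))).map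
        Prod.fst).toFinset ↔ x = b + (j:ℤ) := by
  simp only [Multiset.mem_toFinset, Multiset.mem_map, Multiset.mem_filter]
  constructor
  · rintro ⟨p, ⟨hp, h1, h2⟩, rfl⟩
    rw [mem_simpleMS] at hp
    obtain ⟨k, hk, rfl⟩ := hp
    simp only at h1 h2 ⊢
    omega
  · rintro rfl
    refine ⟨(b + (j:ℤ), e + (j:ℤ)), ⟨mem_simpleMS.2 ⟨j, hj, rfl⟩, ?_, ?_⟩, rfl⟩
    · simp only []; push_cast; ring
    · simp only []; push_cast; omega

lemma chainAux_simple (b e : ℤ) (n : ℕ) :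
    ∀ (j fuel : ℕ), j < n → j ≤ fuel →
    mwChainAux fuel (simpleMS b e n) (b + (j:ℤ), e + (j:ℤ)) =
      (List.range (j+1)).map (fun i : ℕ => (b + (j:ℤ) - i, e + (j:ℤ) - i))
  | 0, fuel, hj, hfuel => by
    cases fuel with
    | zero => simp [mwChainAux, List.range_succ]
    | succ f =>
      have hne : ¬ ((((simpleMS b e n).filter
          (fun p : ℤ × ℤ => p.2 = e + ((0:ℕ):ℤ) - 1 ∧ p.1 < b + ((0:ℕ):ℤ))).map
          Prod.fst).toFinset).Nonempty := by
        rw [Finset.not_nonempty_iff_eq_empty, Finset.eq_empty_iff_forall_notMem]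
        intro x hx
        simp only [Multiset.mem_toFinset, Multiset.mem_map, Multiset.mem_filter] at hx
        obtain ⟨p, ⟨hp, h1, h2⟩, -⟩ := hx
        rw [mem_simpleMS] at hp
        obtain ⟨k, hk, rfl⟩ := hp
        simp only at h1 h2
        omega
      simp only [mwChainAux]
      rw [dif_neg hne]
      simp [List.range_succ]
  | j + 1, fuel, hj, hfuel => by
    cases fuel with
    | zero => omega
    | succ f =>
    have hne : ((((simpleMS b e n).filter
        (fun p : ℤ × ℤ => p.2 = e + ((j+1:ℕ):ℤ) - 1 ∧ p.1 < b + ((j+1:ℕ):ℤ))).map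
        Prod.fst).toFinset).Nonempty :=
      ⟨b + (j:ℤ), (mem_S_iff b e n j (by omega) _).2 rfl⟩
    simp only [mwChainAux]
    rw [dif_pos hne]
    have hmax : Finset.max' _ hne = b + (j:ℤ) :=
      le_antisymm (Finset.max'_le _ _ _
          (fun x hx => le_of_eq ((mem_S_iff b e n j (by omega) x).1 hx)))
        (Finset.le_max' _ _ ((mem_S_iff b e n j (by omega) _).2 rfl))
    rw [hmax]
    have harg : (e : ℤ) + ((j+1:ℕ):ℤ) - 1 = e + (j:ℤ) := by push_cast; ring
    rw [harg, chainAux_simple b e n j f (by omega) (by omega)]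
    conv_rhs => rw [List.range_succ_eq_map]
    rw [List.map_cons, List.map_map]
    congr 1
    · simp only [Nat.cast_zero, Prod.mk.injEq]
      constructor <;> push_cast <;> ring
    · apply List.map_congr_left
      intro i _
      simp only [Function.comp_apply, Prod.mk.injEq]
      constructor <;> push_cast <;> ring
lemma mem_ends_iff (b e : ℤ) (n : ℕ) (x : ℤ) :
    x ∈ ((simpleMS b e n).map Prod.snd).toFinset ↔ ∃ k : ℕ, k < n ∧ x = e + k := by
  simp only [Multiset.mem_toFinset, Multiset.mem_map]
  constructor
  · rintro ⟨p, hp, rfl⟩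
    rw [mem_simpleMS] at hp
    obtain ⟨k, hk, rfl⟩ := hp
    exact ⟨k, hk, rfl⟩
  · rintro ⟨k, hk, rfl⟩
    exact ⟨(b + (k:ℤ), e + (k:ℤ)), mem_simpleMS.2 ⟨k, hk, rfl⟩, rfl⟩

lemma mem_bases_iff (b e : ℤ) (n : ℕ) (hn : 1 ≤ n) (x : ℤ) :
    x ∈ (((simpleMS b e n).filter (fun p : ℤ × ℤ => p.2 = e + (n:ℤ) - 1)).map
      Prod.fst).toFinset ↔ x = b + ((n-1:ℕ):ℤ) := by
  simp only [Multiset.mem_toFinset, Multiset.mem_map, Multiset.mem_filter]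
  constructor
  · rintro ⟨p, ⟨hp, h1⟩, rfl⟩
    rw [mem_simpleMS] at hp
    obtain ⟨k, hk, rfl⟩ := hp
    simp only at h1 ⊢
    omega
  · rintro rfl
    refine ⟨(b + ((n-1:ℕ):ℤ), e + ((n-1:ℕ):ℤ)), ⟨mem_simpleMS.2 ⟨n-1, by omega, rfl⟩, ?_⟩, rfl⟩
    simp only []
    omega

lemma mwChain_simple (b e : ℤ) (n : ℕ) (hn : 1 ≤ n) :
    mwChain (simpleMS b e n) =
      (List.range n).map (fun i : ℕ => (b + ((n-1:ℕ):ℤ) - i, e + ((n-1:ℕ):ℤ) - i)) := by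
  have hne : ((simpleMS b e n).map Prod.snd).toFinset.Nonempty :=
    ⟨e + ((0:ℕ):ℤ), (mem_ends_iff b e n _).2 ⟨0, by omega, rfl⟩⟩
  simp only [mwChain]
  rw [dif_pos hne]
  have hmax : ((simpleMS b e n).map Prod.snd).toFinset.max' hne = e + (n:ℤ) - 1 := by
    apply le_antisymm
    · apply Finset.max'_le
      intro x hx
      obtain ⟨k, hk, rfl⟩ := (mem_ends_iff b e n x).1 hx
      omega
    · exact Finset.le_max' _ _ ((mem_ends_iff b e n _).2 ⟨n-1, by omega, by omega⟩)
  simp only [hmax]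
  have hne2 : (((simpleMS b e n).filter (fun p : ℤ × ℤ => p.2 = e + (n:ℤ) - 1)).map
      Prod.fst).toFinset.Nonempty :=
    ⟨b + ((n-1:ℕ):ℤ), (mem_bases_iff b e n hn _).2 rfl⟩
  rw [dif_pos hne2]
  have hmax2 : Finset.max' _ hne2 = b + ((n-1:ℕ):ℤ) :=
    le_antisymm (Finset.max'_le _ _ _ fun x hx => le_of_eq ((mem_bases_iff b e n hn x).1 hx))
      (Finset.le_max' _ _ ((mem_bases_iff b e n hn _).2 rfl))
  rw [hmax2]
  have hcard : (simpleMS b e n).card = n := by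
    rw [simpleMS_eq, Multiset.card_map, Multiset.card_range]
  rw [hcard]
  have hpair : e + (n:ℤ) - 1 = e + ((n-1:ℕ):ℤ) := by omega
  rw [hpair, chainAux_simple b e n (n-1) n (by omega) (by omega)]
  have h1 : n - 1 + 1 = n := by omega
  rw [h1]

lemma coe_mwChain_simple (b e : ℤ) (n : ℕ) (hn : 1 ≤ n) :
    (↑(mwChain (simpleMS b e n)) : Multiset (ℤ × ℤ)) = simpleMS b e n := by
  rw [mwChain_simple b e n hn, ← Multiset.map_coe]
  have h0 : ((List.range n : List ℕ) : Multiset ℕ) = Multiset.range n := rfl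
  rw [h0]
  rw [Multiset.map_congr rfl (fun i hi => ?_), map_range_rev n (fun k : ℕ => (b + (k:ℤ), e + (k:ℤ))),
    ← simpleMS_eq]
  rw [Multiset.mem_range] at hi
  simp only [Prod.mk.injEq]
  constructor <;> omega

lemma headD_map_range {α : Type*} (f : ℕ → α) (m : ℕ) (d : α) :
    (((List.range (m+1)).map f).headD d) = f 0 := by
  rw [List.range_succ_eq_map]
  rfl

lemma getLastD_map_range {α : Type*} (f : ℕ → α) (m : ℕ) (d : α) :
    (((List.range (m+1)).map f).getLastD d) = f m := by
  rw [List.range_succ, List.map_append]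
  exact List.getLastD_concat

lemma mwSegment_simple (b e : ℤ) (n : ℕ) (hn : 1 ≤ n) :
    mwSegment (simpleMS b e n) = (e, e + (n:ℤ) - 1) := by
  obtain ⟨m, rfl⟩ : ∃ m, n = m + 1 := ⟨n - 1, by omega⟩
  rw [mwSegment, mwChain_simple b e (m+1) hn]
  rw [headD_map_range, getLastD_map_range]
  simp only [Prod.mk.injEq]
  constructor <;> omega

lemma mwResidual_simple (b e : ℤ) (n : ℕ) (hn : 1 ≤ n) :
    mwResidual (simpleMS b e n) = if b ≤ e - 1 then simpleMS b (e-1) n else 0 := by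
  rw [mwResidual, coe_mwChain_simple b e n hn, tsub_self _, zero_add]
  split_ifs with h
  · rw [Multiset.bind_congr (fun p hp => ?_), Multiset.bind_singleton
      (f := fun p : ℤ × ℤ => (p.1, p.2 - 1))]
    · rw [simpleMS_eq, simpleMS_eq, Multiset.map_map]
      apply Multiset.map_congr rfl
      intro k _
      simp only [Function.comp_apply, Prod.mk.injEq]
      exact ⟨trivial, by ring⟩
    · rw [mem_simpleMS] at hp
      obtain ⟨k, hk, rfl⟩ := hp
      rw [mwShrink, if_pos (by simp only []; omega)]
  · rw [Multiset.bind_congr (fun p hp => ?_), Multiset.bind_zero]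
    rw [mem_simpleMS] at hp
    obtain ⟨k, hk, rfl⟩ := hp
    rw [mwShrink, if_neg (by simp only []; omega)]
lemma simpleMS_ne_zero (b e : ℤ) (n : ℕ) (hn : 1 ≤ n) : simpleMS b e n ≠ 0 := by
  intro h
  have := congrArg Multiset.card h
  rw [simpleMS_eq, Multiset.card_map, Multiset.card_range, Multiset.card_zero] at this
  omega

lemma tildeAux_zero : ∀ f, tildeAux f 0 = 0
  | 0 => rfl
  | f + 1 => by rw [tildeAux, if_pos rfl]

lemma tildeAux_simple : ∀ (d : ℕ) (b e : ℤ) (n fuel : ℕ), e = b + d → 1 ≤ n → d + 1 ≤ fuel →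
    tildeAux fuel (simpleMS b e n) =
      (Multiset.range (d+1)).map (fun k : ℕ => (e - (k:ℤ), e + (n:ℤ) - (k:ℤ) - 1))
  | 0, b, e, n, fuel, he, hn, hfuel => by
    obtain ⟨f, rfl⟩ : ∃ f, fuel = f + 1 := ⟨fuel - 1, by omega⟩
    rw [tildeAux, if_neg (simpleMS_ne_zero b e n hn), mwSegment_simple b e n hn,
      mwResidual_simple b e n hn, if_neg (by omega), tildeAux_zero]
    rw [Multiset.range_succ, Multiset.range_zero, Multiset.map_cons, Multiset.map_zero]
    congr 1
    simp only [Nat.cast_zero, Prod.mk.injEq]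
    constructor <;> ring_nf
  | d + 1, b, e, n, fuel, he, hn, hfuel => by
    obtain ⟨f, rfl⟩ : ∃ f, fuel = f + 1 := ⟨fuel - 1, by omega⟩
    rw [tildeAux, if_neg (simpleMS_ne_zero b e n hn), mwSegment_simple b e n hn,
      mwResidual_simple b e n hn, if_pos (by omega),
      tildeAux_simple d b (e-1) n f (by omega) hn (by omega)]
    conv_rhs => rw [range_succ_cons]
    rw [Multiset.map_cons, Multiset.map_map]
    congr 1
    · simp only [Nat.cast_zero, Prod.mk.injEq]
      constructor <;> ring_nf
    · apply Multiset.map_congr rfl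
      intro k _
      simp only [Function.comp_apply, Prod.mk.injEq]
      constructor <;> push_cast <;> ring

lemma msSize_simple (b e : ℤ) (n : ℕ) (hbe : b ≤ e) (hn : 1 ≤ n) :
    (e - b).toNat + 1 ≤ msSize (simpleMS b e n) := by
  rw [msSize, simpleMS_eq, Multiset.map_map]
  have h1 : ∀ k ∈ Multiset.range n, (segLen ∘ fun k : ℕ => (b + (k:ℤ), e + (k:ℤ))) k
      = (e - b).toNat + 1 := by
    intro k _
    simp only [Function.comp_apply, segLen]
    omega
  rw [Multiset.map_congr rfl h1, Multiset.map_const', Multiset.sum_replicate,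
    Multiset.card_range, smul_eq_mul]
  calc (e - b).toNat + 1 = 1 * ((e - b).toNat + 1) := by ring
    _ ≤ n * ((e - b).toNat + 1) := Nat.mul_le_mul_right _ hn

lemma map_coe_range {β : Type*} (m : ℕ) (F : ℤ → β) :
    Multiset.map F ((Multiset.range m).bind (fun a : ℕ => pure ((a:ℤ)))) =
      (Multiset.range m).map (fun k : ℕ => F (k:ℤ)) := by
  show Multiset.map _ ((Multiset.range m).bind fun a => {((a:ℕ) : ℤ)}) = _
  rw [Multiset.bind_singleton, Multiset.map_map]
  rfl

/-- The Zelevinsky involution of the simple multisegment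
`{[b,e], [b+1,e+1], …, [b+n-1,e+n-1]}` is `{[e-k, e+n-k-1] : 0 ≤ k ≤ e-b}`;
in particular it is again simple. -/
theorem tilde_simpleMS (b e : ℤ) (n : ℕ) (hbe : b ≤ e) (hn : 1 ≤ n) :
    tilde (simpleMS b e n) =
      (Multiset.range (e - b + 1).toNat).map
        (fun k => (e - (k : ℤ), e + (n : ℤ) - (k : ℤ) - 1)) ∧
    IsSimple (tilde (simpleMS b e n)) := by
  set d := (e - b).toNat with hd
  have he : e = b + d := by omega
  have h1 : (e - b + 1).toNat = d + 1 := by omega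
  have hsize : d + 1 ≤ msSize (simpleMS b e n) := msSize_simple b e n hbe hn
  have hmain := tildeAux_simple d b e n (msSize (simpleMS b e n)) he hn hsize
  constructor
  · rw [tilde, hmain, h1]
    exact (map_coe_range (d+1) (fun k : ℤ => (e - k, e + (n:ℤ) - k - 1))).symm
  · rw [tilde, hmain]
    refine ⟨b, b + (n:ℤ) - 1, d + 1, by omega, by omega, ?_⟩
    rw [simpleMS_eq]
    rw [Multiset.map_congr rfl (fun k hk => ?_),
      map_range_rev (d+1) (fun k : ℕ => (b + (k:ℤ), b + (n:ℤ) - 1 + (k:ℤ)))]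
    rw [Multiset.mem_range] at hk
    simp only [Prod.mk.injEq]
    constructor <;> omega
end

section
/- Let E_0, E_1, …, E_k be finite-dimensional complex vector spaces and let V be the set of tuples x = (x_1, …, x_k) with x_i a linear map E_i → E_{i−1}. Let H = GL(E_0) × GL(E_1) × ⋯ × GL(E_k) act on V by (h_0, …, h_k) · (x_1, …, x_k) = (h_0 x_1 h_1^{−1}, …, h_{k−1} x_k h_k^{−1}). For 0 ≤ j < i ≤ k, set x_{ij} := x_{j+1} ∘ x_{j+2} ∘ ⋯ ∘ x_i : E_i → E_j. Then two tuples x, y ∈ V lie in the same H-orbit if and only if rank(x_{ij}) = rank(y_{ij}) for all 0 ≤ j < i ≤ k. -/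
/-- The composite `x_{(j+d) j} := x_{j+1} ∘ ⋯ ∘ x_{j+d} : E (j+d) →ₗ E j`, where in
`0`-based indexing `x i : E (i+1) →ₗ E i` plays the role of `x_{i+1} : E_{i+1} → E_i`. -/
def compChain {E : ℕ → Type*} [∀ i, AddCommGroup (E i)] [∀ i, Module ℂ (E i)]
    (x : ∀ i : ℕ, E (i + 1) →ₗ[ℂ] E i) : (d : ℕ) → (j : ℕ) → (E (j + d) →ₗ[ℂ] E j)
  | 0, _ => LinearMap.id
  | d + 1, j => compChain x d j ∘ₗ x (j + d)

open Submodule Module LinearMap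

set_option linter.unusedSectionVars false
set_option maxHeartbeats 1000000

namespace Stmt15

variable {V : Type*} [AddCommGroup V] [Module ℂ V]

section Generic
variable [FiniteDimensional ℂ V]

lemma mapEq (a : V ≃ₗ[ℂ] V) {X : Submodule ℂ V}
    (h : X.map (a : V →ₗ[ℂ] V) ≤ X) : X.map (a : V →ₗ[ℂ] V) = X :=
  Submodule.eq_of_le_of_finrank_le h (le_of_eq (LinearEquiv.finrank_map_eq a X).symm)

lemma mapEq_of_pointwise (a : V ≃ₗ[ℂ] V) {X : Submodule ℂ V}
    (h : ∀ v ∈ X, a v ∈ X) : X.map (a : V →ₗ[ℂ] V) = X :=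
  mapEq a (by rintro _ ⟨v, hv, rfl⟩; exact h v hv)

/-- If `a ≡ id mod U` then `a` preserves every submodule containing `U`. -/
lemma mapMod (a : V ≃ₗ[ℂ] V) {U W : Submodule ℂ V} (hm : ∀ v, a v - v ∈ U)
    (hUW : U ≤ W) : W.map (a : V →ₗ[ℂ] V) = W := by
  refine mapEq_of_pointwise a (fun v hv => ?_)
  have : a v = v + (a v - v) := by abel
  rw [this]; exact W.add_mem hv (hUW (hm v))

/-- decomposition along complementary submodules -/
lemma sumId {p q : Submodule ℂ V} (h : IsCompl p q) (v : V) :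
    ((p.linearProjOfIsCompl q h v : V) + (q.linearProjOfIsCompl p h.symm v : V)) = v := by
  obtain ⟨u, hu, w, hw, rfl⟩ := Submodule.mem_sup.mp
    (by rw [h.sup_eq_top]; exact Submodule.mem_top (x := v))
  have h1 : p.linearProjOfIsCompl q h u = ⟨u, hu⟩ :=
    Submodule.linearProjOfIsCompl_apply_left h ⟨u, hu⟩
  have h2 : p.linearProjOfIsCompl q h w = 0 :=
    Submodule.linearProjOfIsCompl_apply_right' h hw
  have h3 : q.linearProjOfIsCompl p h.symm u = 0 :=
    Submodule.linearProjOfIsCompl_apply_right' h.symm hu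
  have h4 : q.linearProjOfIsCompl p h.symm w = ⟨w, hw⟩ :=
    Submodule.linearProjOfIsCompl_apply_left h.symm ⟨w, hw⟩
  rw [map_add, map_add, h1, h2, h3, h4]
  simp

omit [FiniteDimensional ℂ V] in
/-- relative complement: a complement of `Q ⊓ W` inside `W`. -/
lemma existsRelCompl (Q W : Submodule ℂ V) :
    ∃ C : Submodule ℂ V, C ≤ W ∧ Disjoint Q C ∧ (Q ⊓ W) ⊔ C = W := by
  obtain ⟨C', hC'⟩ := Submodule.exists_isCompl (Submodule.comap W.subtype Q)
  refine ⟨C'.map W.subtype, Submodule.map_subtype_le _ _, ?_, ?_⟩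
  · rw [Submodule.disjoint_def]
    rintro x hxQ ⟨y, hy, rfl⟩
    have hy2 : y ∈ Submodule.comap W.subtype Q := hxQ
    have : y ∈ (⊥ : Submodule ℂ W) := by
      rw [← hC'.inf_eq_bot]; exact ⟨hy2, hy⟩
    simp only [Submodule.mem_bot] at this
    rw [this]; rfl
  · have := congrArg (Submodule.map W.subtype) hC'.sup_eq_top
    rwa [Submodule.map_sup, Submodule.map_comap_subtype, Submodule.map_top,
      Submodule.range_subtype, inf_comm] at this

omit [FiniteDimensional ℂ V] in
lemma exists_notMem_both {A B : Submodule ℂ V} (hA : A ≠ ⊤) (hB : B ≠ ⊤) :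
    ∃ v : V, v ∉ A ∧ v ∉ B := by
  obtain ⟨a, ha⟩ : ∃ a, a ∉ A := by
    by_contra h; push_neg at h; exact hA (Submodule.eq_top_iff'.mpr h)
  obtain ⟨b, hb⟩ : ∃ b, b ∉ B := by
    by_contra h; push_neg at h; exact hB (Submodule.eq_top_iff'.mpr h)
  by_cases haB : a ∉ B
  · exact ⟨a, ha, haB⟩
  by_cases hbA : b ∉ A
  · exact ⟨b, hbA, hb⟩
  push_neg at haB hbA
  refine ⟨a + b, fun h => ha ?_, fun h => hb ?_⟩
  · have := A.sub_mem h hbA; simpa using this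
  · have := B.sub_mem h haB; simpa using this

omit [FiniteDimensional ℂ V] in
lemma span_inf_eq_bot {P : Submodule ℂ V} {v : V} (hvP : v ∉ P) : P ⊓ (ℂ ∙ v) = ⊥ := by
  rw [eq_bot_iff]
  rintro x ⟨hxP, hxv⟩
  obtain ⟨c, rfl⟩ := Submodule.mem_span_singleton.mp hxv
  rcases eq_or_ne c 0 with rfl | hc
  · simp
  · exfalso
    apply hvP
    have := P.smul_mem c⁻¹ hxP
    rwa [smul_smul, inv_mul_cancel₀ hc, one_smul] at this

/-- common complement of two submodules of equal finrank -/
lemma commonCompl : ∀ (n : ℕ) (A B : Submodule ℂ V),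
    finrank ℂ A = finrank ℂ B → finrank ℂ A + n = finrank ℂ V →
    ∃ C, IsCompl A C ∧ IsCompl B C := by
  intro n
  induction n with
  | zero =>
    intro A B hAB hA
    have hA' : A = ⊤ := Submodule.eq_top_of_finrank_eq (by simpa using hA)
    have hB' : B = ⊤ := Submodule.eq_top_of_finrank_eq (by rw [← hAB]; simpa using hA)
    exact ⟨⊥, by rw [hA']; exact isCompl_top_bot, by rw [hB']; exact isCompl_top_bot⟩
  | succ n ih =>
    intro A B hAB hA
    have hAt : A ≠ ⊤ := by
      intro h; rw [h, finrank_top] at hA; omega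
    have hBt : B ≠ ⊤ := by
      rw [hAB] at hA; intro h; rw [h, finrank_top] at hA; omega
    obtain ⟨v, hvA, hvB⟩ := exists_notMem_both hAt hBt
    have hv0 : v ≠ 0 := fun h => hvA (h ▸ A.zero_mem)
    have hdimsup : ∀ (P : Submodule ℂ V), v ∉ P →
        finrank ℂ (P ⊔ (ℂ ∙ v) : Submodule ℂ V) = finrank ℂ P + 1 := by
      intro P hvP
      have h1 := Submodule.finrank_sup_add_finrank_inf_eq P (ℂ ∙ v)
      rw [span_inf_eq_bot hvP, finrank_span_singleton hv0] at h1
      simp only [finrank_bot, add_zero] at h1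
      omega
    obtain ⟨C', hAC', hBC'⟩ := ih (A ⊔ (ℂ ∙ v)) (B ⊔ (ℂ ∙ v))
      (by rw [hdimsup A hvA, hdimsup B hvB, hAB])
      (by rw [hdimsup A hvA]; omega)
    have key : ∀ (P : Submodule ℂ V), v ∉ P → IsCompl (P ⊔ (ℂ ∙ v)) C' →
        IsCompl P (C' ⊔ (ℂ ∙ v)) := by
      intro P hvP hc
      constructor
      · rw [Submodule.disjoint_def]
        intro x hxP hxC
        obtain ⟨c', hc', w, hw, rfl⟩ := Submodule.mem_sup.mp hxC
        have hcP : c' ∈ P ⊔ (ℂ ∙ v) := by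
          have he : c' = (c' + w) - w := by abel
          rw [he]
          exact Submodule.sub_mem _ (Submodule.mem_sup_left hxP) (Submodule.mem_sup_right hw)
        have hc0 : c' = 0 := (Submodule.disjoint_def.mp hc.disjoint) c' hcP hc'
        rw [hc0, zero_add] at hxP ⊢
        have hmem : w ∈ P ⊓ (ℂ ∙ v) := ⟨hxP, hw⟩
        rw [span_inf_eq_bot hvP] at hmem
        simpa using hmem
      · rw [codisjoint_iff]
        have h2 := hc.sup_eq_top
        calc P ⊔ (C' ⊔ (ℂ ∙ v)) = (P ⊔ (ℂ ∙ v)) ⊔ C' := by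
              rw [sup_comm C' _, ← sup_assoc]
          _ = ⊤ := h2
    exact ⟨C' ⊔ (ℂ ∙ v), key A hvA hAC', key B hvB hBC'⟩

end Generic


variable {V : Type*} [AddCommGroup V] [Module ℂ V] [FiniteDimensional ℂ V]

noncomputable def glue2Map {p q p' q' : Submodule ℂ V} (h : IsCompl p q)
    (e : p ≃ₗ[ℂ] p') (f : q ≃ₗ[ℂ] q') : V →ₗ[ℂ] V :=
  p'.subtype ∘ₗ e.toLinearMap ∘ₗ p.linearProjOfIsCompl q h
    + q'.subtype ∘ₗ f.toLinearMap ∘ₗ q.linearProjOfIsCompl p h.symm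

lemma glue2Map_apply_left {p q p' q' : Submodule ℂ V} (h : IsCompl p q)
    (e : p ≃ₗ[ℂ] p') (f : q ≃ₗ[ℂ] q') {v : V} (hv : v ∈ p) :
    glue2Map h e f v = e ⟨v, hv⟩ := by
  have h1 : p.linearProjOfIsCompl q h v = ⟨v, hv⟩ :=
    Submodule.linearProjOfIsCompl_apply_left h ⟨v, hv⟩
  have h2 : q.linearProjOfIsCompl p h.symm v = 0 :=
    Submodule.linearProjOfIsCompl_apply_right' h.symm hv
  simp [glue2Map, h1, h2]

lemma glue2Map_apply_right {p q p' q' : Submodule ℂ V} (h : IsCompl p q)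
    (e : p ≃ₗ[ℂ] p') (f : q ≃ₗ[ℂ] q') {v : V} (hv : v ∈ q) :
    glue2Map h e f v = f ⟨v, hv⟩ := by
  have h1 : q.linearProjOfIsCompl p h.symm v = ⟨v, hv⟩ :=
    Submodule.linearProjOfIsCompl_apply_left h.symm ⟨v, hv⟩
  have h2 : p.linearProjOfIsCompl q h v = 0 :=
    Submodule.linearProjOfIsCompl_apply_right' h hv
  simp [glue2Map, h1, h2]

lemma glue2Map_bijective {p q p' q' : Submodule ℂ V} (h : IsCompl p q)
    (hd : Disjoint p' q')
    (e : p ≃ₗ[ℂ] p') (f : q ≃ₗ[ℂ] q') : Function.Bijective (glue2Map h e f) := by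
  have hinj : Function.Injective (glue2Map h e f) := by
    rw [← LinearMap.ker_eq_bot, eq_bot_iff]
    intro v hv
    rw [LinearMap.mem_ker] at hv
    have hv' : (↑(e (p.linearProjOfIsCompl q h v)) : V)
        + ↑(f (q.linearProjOfIsCompl p h.symm v)) = 0 := hv
    have haq : (↑(e (p.linearProjOfIsCompl q h v)) : V) ∈ q' := by
      rw [eq_neg_of_add_eq_zero_left hv']
      exact q'.neg_mem (f _).2
    have ha0 : (↑(e (p.linearProjOfIsCompl q h v)) : V) = 0 :=
      Submodule.disjoint_def.mp hd _ (e _).2 haq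
    have hb0 : (↑(f (q.linearProjOfIsCompl p h.symm v)) : V) = 0 := by
      rw [ha0, zero_add] at hv'; exact hv'
    have hp1 : p.linearProjOfIsCompl q h v = 0 := by
      have := e.injective (a₁ := p.linearProjOfIsCompl q h v) (a₂ := 0)
        (by rw [map_zero]; exact Subtype.ext ha0)
      exact this
    have hq1 : q.linearProjOfIsCompl p h.symm v = 0 := by
      have := f.injective (a₁ := q.linearProjOfIsCompl p h.symm v) (a₂ := 0)
        (by rw [map_zero]; exact Subtype.ext hb0)
      exact this
    have hvq : v ∈ q := (Submodule.linearProjOfIsCompl_apply_eq_zero_iff h).mp hp1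
    have hvp : v ∈ p := (Submodule.linearProjOfIsCompl_apply_eq_zero_iff h.symm).mp hq1
    have : v ∈ p ⊓ q := ⟨hvp, hvq⟩
    rwa [h.inf_eq_bot] at this
  exact ⟨hinj, LinearMap.injective_iff_surjective.mp hinj⟩

noncomputable def glue2 {p q p' q' : Submodule ℂ V} (h : IsCompl p q)
    (hd : Disjoint p' q')
    (e : p ≃ₗ[ℂ] p') (f : q ≃ₗ[ℂ] q') : V ≃ₗ[ℂ] V :=
  LinearEquiv.ofBijective (glue2Map h e f) (glue2Map_bijective h hd e f)

lemma glue2_apply_left {p q p' q' : Submodule ℂ V} (h : IsCompl p q)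
    (hd : Disjoint p' q') (e : p ≃ₗ[ℂ] p') (f : q ≃ₗ[ℂ] q') {v : V} (hv : v ∈ p) :
    glue2 h hd e f v = e ⟨v, hv⟩ := glue2Map_apply_left h e f hv

lemma glue2_apply_right {p q p' q' : Submodule ℂ V} (h : IsCompl p q)
    (hd : Disjoint p' q') (e : p ≃ₗ[ℂ] p') (f : q ≃ₗ[ℂ] q') {v : V} (hv : v ∈ q) :
    glue2 h hd e f v = f ⟨v, hv⟩ := glue2Map_apply_right h e f hv

lemma rank_comp_add {U W : Type*} [AddCommGroup U] [Module ℂ U]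
    [AddCommGroup W] [Module ℂ W]
    (f : W →ₗ[ℂ] V) (c : V →ₗ[ℂ] U) :
    finrank ℂ (range (c ∘ₗ f)) + finrank ℂ ((range f) ⊓ (ker c) : Submodule ℂ V)
      = finrank ℂ (range f) := by
  have h1 := LinearMap.finrank_range_add_finrank_ker (c ∘ₗ (range f).subtype)
  have h2 : range (c ∘ₗ (range f).subtype) = range (c ∘ₗ f) := by
    rw [LinearMap.range_comp, LinearMap.range_comp, Submodule.range_subtype]
  have h5 : Submodule.comap (range f).subtype ((ker c) ⊓ (range f))
      = Submodule.comap (range f).subtype (ker c) := by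
    rw [Submodule.comap_inf, Submodule.comap_subtype_self, inf_top_eq]
  have h4 : finrank ℂ (Submodule.comap (range f).subtype (ker c))
      = finrank ℂ ((range f) ⊓ (ker c) : Submodule ℂ V) := by
    rw [inf_comm, ← h5]
    exact (Submodule.comapSubtypeEquivOfLe
      (inf_le_right : (ker c) ⊓ (range f) ≤ range f)).finrank_eq
  have h3 : ker (c ∘ₗ (range f).subtype) = Submodule.comap (range f).subtype (ker c) :=
    LinearMap.ker_comp _ _
  rw [h2, h3, h4] at h1
  exact h1



section Part3
variable [FiniteDimensional ℂ V]

lemma l3amb : ∀ (m : ℕ) (F : ℕ → Submodule ℂ V), (∀ i, i < m → F (i+1) ≤ F i) →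
    ∀ (R : Submodule ℂ V), ∃ C, C ≤ F 0 ∧ Disjoint R C ∧ (R ⊓ F 0) ⊔ C = F 0 ∧
      ∀ j ≤ m, F j ≤ (F j ⊓ R) ⊔ (F j ⊓ C) := by
  intro m
  induction m with
  | zero =>
    intro F _ R
    obtain ⟨C, hCW, hdis, hsup⟩ := existsRelCompl R (F 0)
    refine ⟨C, hCW, hdis, hsup, ?_⟩
    intro j hj
    interval_cases j
    conv_lhs => rw [← hsup]
    exact sup_le_sup (le_of_eq (inf_comm _ _)) (le_inf hCW le_rfl)
  | succ m ih =>
    intro F hmono R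
    obtain ⟨C'', hC''le, hC''dis, hC''sup, hC''ad⟩ :=
      ih (fun j => F (j+1)) (fun i hi => hmono (i+1) (by omega)) R
    obtain ⟨D, hDle, hDdis, hDsup⟩ := existsRelCompl (R ⊔ F 1) (F 0)
    have hF10 : F 1 ≤ F 0 := hmono 0 (by omega)
    have hCF0 : C'' ⊔ D ≤ F 0 := sup_le (hC''le.trans hF10) hDle
    have hdisj : Disjoint R (C'' ⊔ D) := by
      rw [Submodule.disjoint_def]
      intro x hxR hxCD
      obtain ⟨c, hc, d, hd, rfl⟩ := Submodule.mem_sup.mp hxCD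
      have hdRF : d ∈ (R ⊔ F 1) := by
        have he : d = (c + d) - c := by abel
        rw [he]
        exact Submodule.sub_mem _ (Submodule.mem_sup_left hxR)
          (Submodule.mem_sup_right (hC''le hc))
      have hd0 : d = 0 := (Submodule.disjoint_def.mp hDdis) d hdRF hd
      rw [hd0, add_zero] at hxR ⊢
      exact (Submodule.disjoint_def.mp hC''dis) c hxR hc
    have hsupEq : (R ⊓ F 0) ⊔ (C'' ⊔ D) = F 0 := by
      apply le_antisymm (sup_le inf_le_right hCF0)
      intro w hw
      rw [← hDsup] at hw
      obtain ⟨u, hu, d, hd, rfl⟩ := Submodule.mem_sup.mp hw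
      obtain ⟨hu1, hu0⟩ := hu
      obtain ⟨r, hr, f₁, hf₁, rfl⟩ := Submodule.mem_sup.mp hu1
      rw [← hC''sup] at hf₁
      obtain ⟨r', hr', cc, hcc, rfl⟩ := Submodule.mem_sup.mp hf₁
      obtain ⟨hr'1, hr'2⟩ := hr'
      have hmem1 : r + r' ∈ R ⊓ F 0 := by
        constructor
        · exact Submodule.add_mem _ hr hr'1
        · have he : r + r' = (r + (r' + cc)) - cc := by abel
          rw [he]
          exact Submodule.sub_mem _ hu0 (hF10 (hC''le hcc))
      have he2 : r + (r' + cc) + d = (r + r') + (cc + d) := by abel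
      rw [he2]
      exact Submodule.add_mem _ (Submodule.mem_sup_left hmem1)
        (Submodule.mem_sup_right (Submodule.add_mem _ (Submodule.mem_sup_left hcc)
          (Submodule.mem_sup_right hd)))
    refine ⟨C'' ⊔ D, hCF0, hdisj, hsupEq, ?_⟩
    intro j hj
    cases j with
    | zero =>
      conv_lhs => rw [← hsupEq]
      exact sup_le_sup (le_of_eq (inf_comm _ _)) (le_inf hCF0 le_rfl)
    | succ j' =>
      have := hC''ad j' (by omega)
      refine this.trans (sup_le_sup_left ?_ _)
      exact inf_le_inf_left _ le_sup_left

lemma adaptedCompl (m : ℕ) (F : ℕ → Submodule ℂ V) (hmono : ∀ i, i < m → F (i+1) ≤ F i)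
    (R : Submodule ℂ V) :
    ∃ C, IsCompl R C ∧ ∀ j ≤ m, F j ≤ (F j ⊓ R) ⊔ (F j ⊓ C) := by
  have hGmono : ∀ i, i < m + 1 →
      (fun t => Nat.casesOn t ⊤ F : ℕ → Submodule ℂ V) (i+1)
        ≤ (fun t => Nat.casesOn t ⊤ F : ℕ → Submodule ℂ V) i := by
    intro i hi
    cases i with
    | zero => exact le_top
    | succ i => exact hmono i (by omega)
  obtain ⟨C, hle, hdis, hsup, had⟩ := l3amb (m+1) (fun t => Nat.casesOn t ⊤ F) hGmono R
  refine ⟨C, ⟨hdis, codisjoint_iff.mpr ?_⟩, fun j hj => had (j+1) (by omega)⟩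
  have h2 : (R ⊓ (⊤:Submodule ℂ V)) ⊔ C = ⊤ := hsup
  rwa [inf_top_eq] at h2


/-- Core moving lemma: an automorphism fixing `M` pointwise, congruent to the identity
mod `M'`, moving `P₁` to `Q`. -/
lemma moveLemma {M M' P₁ Q : Submodule ℂ V} (hMM' : M ≤ M') (hP : P₁ ≤ M') (hQ : Q ≤ M')
    (hZ : P₁ ⊓ M = Q ⊓ M) (hdim : finrank ℂ P₁ = finrank ℂ Q) :
    ∃ c : V ≃ₗ[ℂ] V, (∀ v ∈ M, c v = v) ∧ (∀ v, c v - v ∈ M') ∧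
      P₁.map (c : V →ₗ[ℂ] V) = Q := by
  obtain ⟨P'', hP''le, hP''dis, hP''sup⟩ := existsRelCompl M P₁
  obtain ⟨Q'', hQ''le, hQ''dis, hQ''sup⟩ := existsRelCompl M Q
  have hZ' : M ⊓ P₁ = M ⊓ Q := by rw [inf_comm, hZ, inf_comm]
  have hdP : finrank ℂ (M ⊓ P₁ : Submodule ℂ V) + finrank ℂ P'' = finrank ℂ P₁ := by
    have h := Submodule.finrank_sup_add_finrank_inf_eq (M ⊓ P₁) P''
    rw [hP''sup, (hP''dis.mono_left inf_le_left).eq_bot] at h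
    simp only [finrank_bot, add_zero] at h
    omega
  have hdQ : finrank ℂ (M ⊓ Q : Submodule ℂ V) + finrank ℂ Q'' = finrank ℂ Q := by
    have h := Submodule.finrank_sup_add_finrank_inf_eq (M ⊓ Q) Q''
    rw [hQ''sup, (hQ''dis.mono_left inf_le_left).eq_bot] at h
    simp only [finrank_bot, add_zero] at h
    omega
  have hPQ'' : finrank ℂ P'' = finrank ℂ Q'' := by
    rw [hZ'] at hdP
    omega
  have hsupP : finrank ℂ (M ⊔ P'' : Submodule ℂ V) = finrank ℂ M + finrank ℂ P'' := by
    have h := Submodule.finrank_sup_add_finrank_inf_eq M P''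
    rw [hP''dis.eq_bot] at h
    simp only [finrank_bot, add_zero] at h
    omega
  have hsupQ : finrank ℂ (M ⊔ Q'' : Submodule ℂ V) = finrank ℂ M + finrank ℂ Q'' := by
    have h := Submodule.finrank_sup_add_finrank_inf_eq M Q''
    rw [hQ''dis.eq_bot] at h
    simp only [finrank_bot, add_zero] at h
    omega
  obtain ⟨Rc, hRcP, hRcQ⟩ := commonCompl (finrank ℂ V - finrank ℂ (M ⊔ P'' : Submodule ℂ V))
    (M ⊔ P'') (M ⊔ Q'') (by omega)
    (by have := Submodule.finrank_le (M ⊔ P''); omega)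
  have hcompl : IsCompl (M ⊔ Rc) P'' := by
    constructor
    · rw [Submodule.disjoint_def]
      intro x hxMR hxP
      obtain ⟨mm, hmm, r, hr, rfl⟩ := Submodule.mem_sup.mp hxMR
      have hrmem : r ∈ (M ⊔ P'') := by
        have he : r = (mm + r) - mm := by abel
        rw [he]
        exact Submodule.sub_mem _ (Submodule.mem_sup_right hxP) (Submodule.mem_sup_left hmm)
      have hr0 : r = 0 := (Submodule.disjoint_def.mp hRcP.disjoint) r hrmem hr
      rw [hr0, add_zero] at hxP ⊢
      exact (Submodule.disjoint_def.mp hP''dis) mm hmm hxP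
    · rw [codisjoint_iff]
      calc (M ⊔ Rc) ⊔ P'' = (M ⊔ P'') ⊔ Rc := by rw [sup_right_comm]
        _ = ⊤ := hRcP.sup_eq_top
  have hdisj' : Disjoint (M ⊔ Rc) Q'' := by
    rw [Submodule.disjoint_def]
    intro x hxMR hxQ
    obtain ⟨mm, hmm, r, hr, rfl⟩ := Submodule.mem_sup.mp hxMR
    have hrmem : r ∈ (M ⊔ Q'') := by
      have he : r = (mm + r) - mm := by abel
      rw [he]
      exact Submodule.sub_mem _ (Submodule.mem_sup_right hxQ) (Submodule.mem_sup_left hmm)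
    have hr0 : r = 0 := (Submodule.disjoint_def.mp hRcQ.disjoint) r hrmem hr
    rw [hr0, add_zero] at hxQ ⊢
    exact (Submodule.disjoint_def.mp hQ''dis) mm hmm hxQ
  set f : (P'' : Submodule ℂ V) ≃ₗ[ℂ] (Q'' : Submodule ℂ V) :=
    LinearEquiv.ofFinrankEq _ _ hPQ'' with hf
  set c : V ≃ₗ[ℂ] V := glue2 hcompl hdisj' (LinearEquiv.refl ℂ _) f with hc
  have hfix : ∀ v ∈ M, c v = v := by
    intro v hv
    rw [hc, glue2_apply_left hcompl hdisj' _ _ (Submodule.mem_sup_left hv)]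
    rfl
  have hfixMR : ∀ v ∈ M ⊔ Rc, c v = v := by
    intro v hv
    rw [hc, glue2_apply_left hcompl hdisj' _ _ hv]
    rfl
  have happly'' : ∀ (v : V) (hv : v ∈ P''), c v = f ⟨v, hv⟩ := by
    intro v hv
    rw [hc, glue2_apply_right hcompl hdisj' _ _ hv]
  have hdiff : ∀ v, c v - v ∈ M' := by
    intro v
    have hs := sumId hcompl v
    set u := (((M ⊔ Rc).linearProjOfIsCompl P'' hcompl) v : V) with hu
    set w := ((P''.linearProjOfIsCompl (M ⊔ Rc) hcompl.symm) v : V) with hw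
    have hcv : c v = c u + c w := by rw [← map_add, hs]
    have hcu : c u = u := hfixMR u (((M ⊔ Rc).linearProjOfIsCompl P'' hcompl) v).2
    have hcw : c w = f ⟨w, ((P''.linearProjOfIsCompl (M ⊔ Rc) hcompl.symm) v).2⟩ :=
      happly'' w _
    have he : c v - v = (c w - w) + (c u - u) + ((u + w) - v) := by rw [hcv]; abel
    rw [he, hs, hcu]
    simp only [sub_self, add_zero]
    rw [hcw]
    exact Submodule.sub_mem _ (hQ (hQ''le (f _).2)) (hP (hP''le (((P''.linearProjOfIsCompl (M ⊔ Rc) hcompl.symm) v)).2))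
  have hmapP'' : P''.map (c : V →ₗ[ℂ] V) = Q'' := by
    apply Submodule.eq_of_le_of_finrank_eq
    · rintro _ ⟨v, hv, rfl⟩
      show (c : V →ₗ[ℂ] V) v ∈ Q''
      rw [LinearEquiv.coe_coe, happly'' v hv]
      exact (f ⟨v, hv⟩).2
    · rw [LinearEquiv.finrank_map_eq]
      exact hPQ''
  have hmapZ : (M ⊓ P₁).map (c : V →ₗ[ℂ] V) = M ⊓ P₁ :=
    mapEq_of_pointwise c (fun v hv => by rw [hfix v hv.1]; exact hv)
  refine ⟨c, hfix, hdiff, ?_⟩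
  rw [← hP''sup, Submodule.map_sup, hmapZ, hmapP'', hZ', hQ''sup]

/-- monotonicity of a flag given adjacent inclusions -/
lemma flagMono {N : ℕ → Submodule ℂ V} {m : ℕ} (hmono : ∀ i, i < m → N i ≤ N (i+1)) :
    ∀ i j, i ≤ j → j ≤ m → N i ≤ N j := by
  intro i j hij hjm
  obtain ⟨t, rfl⟩ := Nat.exists_eq_add_of_le hij
  clear hij
  revert hjm
  induction t with
  | zero => intro _; exact le_rfl
  | succ t iht =>
    intro hjm
    exact (iht (by omega)).trans (hmono (i + t) (by omega))

/-- S1: flag-preserving automorphism moving P to Q. -/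
lemma flagMove : ∀ (m : ℕ) (N : ℕ → Submodule ℂ V), (∀ i, i < m → N i ≤ N (i+1)) →
    ∀ P Q : Submodule ℂ V, P ≤ N m → Q ≤ N m →
    (∀ j ≤ m, finrank ℂ (P ⊓ N j : Submodule ℂ V) = finrank ℂ (Q ⊓ N j : Submodule ℂ V)) →
    ∃ a : V ≃ₗ[ℂ] V, P.map (a : V →ₗ[ℂ] V) = Q ∧ (∀ v, a v - v ∈ N m) ∧
      (∀ j ≤ m, (N j).map (a : V →ₗ[ℂ] V) = N j) := by
  intro m
  induction m with
  | zero =>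
    intro N _ P Q hP hQ hcond
    obtain ⟨c, hfix, hdiff, hmap⟩ := moveLemma (M := ⊥) (M' := N 0) bot_le hP hQ (by simp)
      (by rw [← inf_eq_left.mpr hP, ← inf_eq_left.mpr hQ]; exact hcond 0 le_rfl)
    exact ⟨c, hmap, hdiff, fun j hj => by interval_cases j; exact mapMod c hdiff le_rfl⟩
  | succ m ih =>
    intro N hmono P Q hP hQ hcond
    have hNle : ∀ i j, i ≤ j → j ≤ m + 1 → N i ≤ N j := flagMono hmono
    obtain ⟨a', hmapa', hdiffa', hflaga'⟩ := ih N (fun i hi => hmono i (by omega))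
      (P ⊓ N m) (Q ⊓ N m) inf_le_right inf_le_right
      (fun j hj => by
        rw [inf_assoc, inf_eq_right.mpr (hNle j m hj (by omega)),
          inf_assoc, inf_eq_right.mpr (hNle j m hj (by omega))]
        exact hcond j (by omega))
    set P₁ := P.map (a' : V →ₗ[ℂ] V) with hP₁
    have hP₁le : P₁ ≤ N (m+1) := by
      rintro _ ⟨v, hv, rfl⟩
      show a' v ∈ N (m+1)
      have he : a' v = v + (a' v - v) := by abel
      rw [he]
      exact (N (m+1)).add_mem (hP hv) (hmono m (by omega) (hdiffa' v))
    have hZ : P₁ ⊓ N m = Q ⊓ N m := by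
      have h1 : P₁ ⊓ N m = (P ⊓ N m).map (a' : V →ₗ[ℂ] V) := by
        rw [Submodule.map_inf ((a' : V →ₗ[ℂ] V)) a'.injective, hflaga' m le_rfl]
      rw [h1, hmapa']
    have hd : finrank ℂ P₁ = finrank ℂ Q := by
      rw [hP₁, LinearEquiv.finrank_map_eq]
      have := hcond (m+1) le_rfl
      rwa [inf_eq_left.mpr hP, inf_eq_left.mpr hQ] at this
    obtain ⟨c, hfix, hdiffc, hmapc⟩ := moveLemma (hmono m (by omega)) hP₁le hQ hZ hd
    have hcoe : ((a'.trans c : V ≃ₗ[ℂ] V) : V →ₗ[ℂ] V)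
        = (c : V →ₗ[ℂ] V) ∘ₗ (a' : V →ₗ[ℂ] V) := rfl
    refine ⟨a'.trans c, ?_, ?_, ?_⟩
    · rw [hcoe, Submodule.map_comp]
      exact hmapc
    · intro v
      have h1 : (a'.trans c) v - v = (c (a' v) - a' v) + (a' v - v) := by
        simp only [LinearEquiv.trans_apply]
        abel
      rw [h1]
      exact Submodule.add_mem _ (hdiffc _) (hmono m (by omega) (hdiffa' v))
    · intro j hj
      rcases Nat.lt_or_ge j (m+1) with h | h
      · have hj' : j ≤ m := by omega
        rw [hcoe, Submodule.map_comp, hflaga' j hj']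
        exact mapEq_of_pointwise c
          (fun v hv => by rw [hfix v (hNle j m hj' (by omega) hv)]; exact hv)
      · have hjeq : j = m+1 := by omega
        subst hjeq
        rw [hcoe, Submodule.map_comp,
          mapMod a' (fun v => hdiffa' v) (hmono m (by omega)),
          mapMod c (fun v => hdiffc v) le_rfl]

end Part3

/-- S3: two maps with the same range differ by an automorphism of the source. -/
lemma factorEquiv {W V' : Type*} [AddCommGroup W] [Module ℂ W] [FiniteDimensional ℂ W]
    [AddCommGroup V'] [Module ℂ V'] [FiniteDimensional ℂ V']
    (f' g : W →ₗ[ℂ] V') (hrange : range f' = range g) :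
    ∃ b : W ≃ₗ[ℂ] W, f' = g ∘ₗ (b : W →ₗ[ℂ] W) := by
  obtain ⟨Cf, hCf⟩ := Submodule.exists_isCompl (ker f')
  obtain ⟨Cg, hCg⟩ := Submodule.exists_isCompl (ker g)
  have hrk : finrank ℂ (range f') = finrank ℂ (range g) := by rw [hrange]
  have hkf := LinearMap.finrank_range_add_finrank_ker f'
  have hkg := LinearMap.finrank_range_add_finrank_ker g
  have hCfd := Submodule.finrank_add_eq_of_isCompl hCf
  have hCgd := Submodule.finrank_add_eq_of_isCompl hCg
  -- γf : Cf ≃ range f'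
  set μf : ↥Cf →ₗ[ℂ] ↥(range f') := LinearMap.codRestrict (range f') (f' ∘ₗ Cf.subtype)
    (fun c => ⟨(c : W), rfl⟩) with hμf
  have hμfinj : Function.Injective μf := by
    rw [← LinearMap.ker_eq_bot, eq_bot_iff]
    rintro ⟨c, hc⟩ hker
    rw [LinearMap.mem_ker] at hker
    have h1 : f' c = 0 := congrArg Subtype.val hker
    have h2 : c ∈ ker f' ⊓ Cf := ⟨h1, hc⟩
    rw [hCf.inf_eq_bot] at h2
    simpa using h2
  have hdimf : finrank ℂ Cf = finrank ℂ (range f') := by omega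
  have hμfsurj : Function.Surjective μf :=
    (LinearMap.injective_iff_surjective_of_finrank_eq_finrank hdimf).mp hμfinj
  set γf := LinearEquiv.ofBijective μf ⟨hμfinj, hμfsurj⟩ with hγf
  set μg : ↥Cg →ₗ[ℂ] ↥(range g) := LinearMap.codRestrict (range g) (g ∘ₗ Cg.subtype)
    (fun c => ⟨(c : W), rfl⟩) with hμg
  have hμginj : Function.Injective μg := by
    rw [← LinearMap.ker_eq_bot, eq_bot_iff]
    rintro ⟨c, hc⟩ hker
    rw [LinearMap.mem_ker] at hker
    have h1 : g c = 0 := congrArg Subtype.val hker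
    have h2 : c ∈ ker g ⊓ Cg := ⟨h1, hc⟩
    rw [hCg.inf_eq_bot] at h2
    simpa using h2
  have hdimg : finrank ℂ Cg = finrank ℂ (range g) := by omega
  have hμgsurj : Function.Surjective μg :=
    (LinearMap.injective_iff_surjective_of_finrank_eq_finrank hdimg).mp hμginj
  set γg := LinearEquiv.ofBijective μg ⟨hμginj, hμgsurj⟩ with hγg
  set isoK : ↥(ker f') ≃ₗ[ℂ] ↥(ker g) := LinearEquiv.ofFinrankEq _ _ (by omega) with hisoK
  set isoC : ↥Cf ≃ₗ[ℂ] ↥Cg :=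
    γf.trans ((LinearEquiv.ofEq _ _ hrange).trans γg.symm) with hisoC
  set b := glue2 hCf hCg.disjoint isoK isoC with hb
  have hγfval : ∀ (c : ↥Cf), ((γf c : ↥(range f')) : V') = f' c := fun c => rfl
  have hγgval : ∀ (c : ↥Cg), ((γg c : ↥(range g)) : V') = g c := fun c => rfl
  have hgiso : ∀ (c : ↥Cf), g (↑(isoC c) : W) = f' c := by
    intro c
    have h1 : γg (isoC c) = (LinearEquiv.ofEq _ _ hrange) (γf c) := by
      rw [hisoC]
      simp
    have h2 := hγgval (isoC c)
    rw [h1] at h2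
    have h3 : ((((LinearEquiv.ofEq _ _ hrange) (γf c)) : ↥(range g)) : V')
        = ((γf c : ↥(range f')) : V') := rfl
    rw [h3, hγfval] at h2
    exact h2.symm
  refine ⟨b, ?_⟩
  ext w
  show f' w = g (b w)
  have hs := sumId hCf w
  set u := ((ker f').linearProjOfIsCompl Cf hCf w : W) with hu
  set c := (Cf.linearProjOfIsCompl (ker f') hCf.symm w : W) with hc
  have hbw : b w = b u + b c := by rw [← map_add, hs]
  have hbu : b u = isoK (((ker f').linearProjOfIsCompl Cf hCf w)) := by
    rw [hb]
    exact glue2_apply_left hCf hCg.disjoint _ _ (((ker f').linearProjOfIsCompl Cf hCf w)).2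
  have hbc : b c = isoC ((Cf.linearProjOfIsCompl (ker f') hCf.symm w)) := by
    rw [hb]
    exact glue2_apply_right hCf hCg.disjoint _ _ ((Cf.linearProjOfIsCompl (ker f') hCf.symm w)).2
  rw [hbw, map_add, hbu, hbc]
  have h1 : g (↑(isoK (((ker f').linearProjOfIsCompl Cf hCf w))) : W) = 0 :=
    (isoK _).2
  have h2 := hgiso ((Cf.linearProjOfIsCompl (ker f') hCf.symm w))
  rw [h1, h2, zero_add]
  have h3 : f' w = f' u + f' c := by rw [← map_add, hs]
  have h4 : f' u = 0 := ((ker f').linearProjOfIsCompl Cf hCf w).2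
  rw [h3, h4, zero_add]


section Chain

variable {E : ℕ → Type*} [∀ i, AddCommGroup (E i)] [∀ i, Module ℂ (E i)]

def castE {a b : ℕ} (h : a = b) : E a ≃ₗ[ℂ] E b := h ▸ LinearEquiv.refl ℂ (E a)

@[simp] lemma castE_rfl {a : ℕ} :
    (castE (rfl : a = a) : E a ≃ₗ[ℂ] E a) = LinearEquiv.refl ℂ (E a) := rfl

def dcomp (x : ∀ i : ℕ, E (i + 1) →ₗ[ℂ] E i) (s j : ℕ) : E s →ₗ[ℂ] E j :=
  if h : j ≤ s then compChain x (s - j) j ∘ₗ (castE (by omega : s = j + (s - j))).toLinearMap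
  else 0

lemma compChain_congr (x : ∀ i : ℕ, E (i + 1) →ₗ[ℂ] E i) {j d e : ℕ} (h : d = e) :
    compChain x e j ∘ₗ (castE (congrArg (j + ·) h) : E (j+d) ≃ₗ[ℂ] E (j+e)).toLinearMap
      = compChain x d j := by
  subst h
  show compChain x d j ∘ₗ (LinearEquiv.refl ℂ (E (j+d))).toLinearMap = compChain x d j
  simp

lemma dcomp_eq (x : ∀ i : ℕ, E (i + 1) →ₗ[ℂ] E i) {s j d : ℕ} (hs : s = j + d) :
    dcomp x s j = compChain x d j ∘ₗ (castE (E := E) hs).toLinearMap := by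
  subst hs
  rw [dcomp, dif_pos (Nat.le_add_right j d)]
  have h := compChain_congr (E := E) x (j := j) (d := d) (e := j + d - j) (by omega)
  exact h.symm ▸ (by exact h ▸ h.symm ▸ rfl : compChain x (j + d - j) j ∘ₗ (castE (by omega : j + d = j + (j + d - j)) : E (j+d) ≃ₗ[ℂ] E (j + (j+d-j))).toLinearMap = compChain x d j ∘ₗ (castE (rfl : j + d = j + d)).toLinearMap)

lemma dcomp_self (x : ∀ i : ℕ, E (i + 1) →ₗ[ℂ] E i) (s : ℕ) :
    dcomp x s s = LinearMap.id := by
  rw [dcomp_eq x (j := s) (d := 0) (rfl : s = s + 0)]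
  ext v
  rfl

lemma dcomp_eq_compChain (x : ∀ i : ℕ, E (i + 1) →ₗ[ℂ] E i) (j d : ℕ) :
    dcomp x (j + d) j = compChain x d j := by
  rw [dcomp_eq x (j := j) (d := d) (rfl : j + d = j + d)]
  ext v
  rfl

lemma dcomp_succ (x : ∀ i : ℕ, E (i + 1) →ₗ[ℂ] E i) {s j : ℕ} (h : j ≤ s) :
    dcomp x (s+1) j = dcomp x s j ∘ₗ x s := by
  obtain ⟨d, rfl⟩ := Nat.exists_eq_add_of_le h
  rw [dcomp_eq x (j := j) (d := d + 1) (rfl : j + d + 1 = j + (d + 1)),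
    dcomp_eq x (j := j) (d := d) (rfl : j + d = j + d)]
  ext v
  rfl

lemma dcomp_comp (x : ∀ i : ℕ, E (i + 1) →ₗ[ℂ] E i) {j t : ℕ} (hjt : j ≤ t) :
    ∀ d, dcomp x (t + d) j = dcomp x t j ∘ₗ dcomp x (t + d) t := by
  intro d
  induction d with
  | zero =>
    show dcomp x t j = dcomp x t j ∘ₗ dcomp x t t
    rw [dcomp_self x t]
    rfl
  | succ d ihd =>
    show dcomp x ((t + d) + 1) j = dcomp x t j ∘ₗ dcomp x ((t + d) + 1) t
    rw [dcomp_succ x (by omega : j ≤ t + d),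
      dcomp_succ x (by omega : t ≤ t + d), ihd, LinearMap.comp_assoc]

lemma ker_dcomp_mono (x : ∀ i : ℕ, E (i + 1) →ₗ[ℂ] E i) {s j t : ℕ}
    (hjt : j ≤ t) (hts : t ≤ s) :
    ker (dcomp x s t) ≤ ker (dcomp x s j) := by
  obtain ⟨d, rfl⟩ := Nat.exists_eq_add_of_le hts
  rw [dcomp_comp x hjt d]
  intro v hv
  rw [LinearMap.mem_ker] at *
  rw [LinearMap.comp_apply, hv, map_zero]

lemma intertwine_dcomp {x y : ∀ i : ℕ, E (i + 1) →ₗ[ℂ] E i} {h : ∀ i, E i ≃ₗ[ℂ] E i} {k : ℕ}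
    (hint : ∀ i < k, (h i).toLinearMap ∘ₗ x i = y i ∘ₗ (h (i+1)).toLinearMap) :
    ∀ s ≤ k, ∀ j ≤ s, dcomp y s j ∘ₗ (h s).toLinearMap = (h j).toLinearMap ∘ₗ dcomp x s j := by
  intro s
  induction s with
  | zero =>
    intro _ j hj
    interval_cases j
    rw [dcomp_self, dcomp_self]
    ext v; rfl
  | succ s ihs =>
    intro hs j hj
    rcases Nat.eq_or_lt_of_le hj with rfl | hlt
    · rw [dcomp_self, dcomp_self]
      ext v; rfl
    · have hj' : j ≤ s := by omega
      rw [dcomp_succ x hj', dcomp_succ y hj', LinearMap.comp_assoc, ← hint s (by omega),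
        ← LinearMap.comp_assoc, ihs (by omega) j hj', LinearMap.comp_assoc]


section ChainFD
variable [∀ i, FiniteDimensional ℂ (E i)]

lemma comap_of_map_eq {V : Type*} [AddCommGroup V] [Module ℂ V]
    (a : V ≃ₗ[ℂ] V) {K : Submodule ℂ V} (h : K.map (a : V →ₗ[ℂ] V) = K) :
    K.comap (a : V →ₗ[ℂ] V) = K := by
  apply le_antisymm
  · intro v hv
    rw [Submodule.mem_comap] at hv
    rw [← h] at hv
    obtain ⟨u, hu, huv⟩ := hv
    have heq : u = v := a.injective huv
    rwa [← heq]
  · intro v hv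
    rw [Submodule.mem_comap, ← h]
    exact ⟨v, hv, rfl⟩

/-- one-step extension: an automorphism at level `s+1` preserving kernels induces a
compatible automorphism at level `s`. -/
lemma oneStep (x : ∀ i : ℕ, E (i + 1) →ₗ[ℂ] E i) (s : ℕ) (a : E (s+1) ≃ₗ[ℂ] E (s+1))
    (ha : ∀ j ≤ s + 1,
      (ker (dcomp x (s+1) j)).map (a : E (s+1) →ₗ[ℂ] E (s+1)) = ker (dcomp x (s+1) j)) :
    ∃ b : E s ≃ₗ[ℂ] E s, (b : E s →ₗ[ℂ] E s) ∘ₗ x s = x s ∘ₗ (a : E (s+1) →ₗ[ℂ] E (s+1)) ∧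
      ∀ j ≤ s, (ker (dcomp x s j)).map (b : E s →ₗ[ℂ] E s) = ker (dcomp x s j) := by
  set ψ := x s with hψdef
  set R := range ψ with hRdef
  have hdc : ∀ j ≤ s, dcomp x (s+1) j = dcomp x s j ∘ₗ ψ := fun j hj => dcomp_succ x hj
  have hdcs : dcomp x (s+1) s = ψ := by
    rw [dcomp_succ x le_rfl, dcomp_self]
    ext v; rfl
  have hkψ : (ker ψ).map (a : E (s+1) →ₗ[ℂ] E (s+1)) = ker ψ := by
    have := ha s (by omega)
    rwa [hdcs] at this
  set φ := ψ ∘ₗ (a : E (s+1) →ₗ[ℂ] E (s+1)) with hφdef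
  have hkφ : ker φ = ker ψ := by
    rw [hφdef, LinearMap.ker_comp]
    exact comap_of_map_eq a hkψ
  -- the induced automorphism of R
  set σ := LinearMap.codRestrict R ψ (fun v => LinearMap.mem_range_self ψ v) with hσdef
  have hσsurj : Function.Surjective σ := by
    rintro ⟨w, hw⟩
    obtain ⟨v, rfl⟩ := hw
    exact ⟨v, rfl⟩
  obtain ⟨sec, hsec⟩ := σ.exists_rightInverse_of_surjective (LinearMap.range_eq_top.2 hσsurj)
  set τ := LinearMap.codRestrict R φ
    (fun v => by rw [hφdef]; exact LinearMap.mem_range_self ψ _) with hτdef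
  set ρ₀ := τ ∘ₗ sec with hρ₀def
  have hσker : ∀ w, σ w = 0 ↔ w ∈ ker ψ := by
    intro w
    constructor
    · intro hw
      have : ψ w = 0 := congrArg Subtype.val hw
      exact this
    · intro hw
      exact Subtype.ext hw
  have key1 : ∀ w, ρ₀ (σ w) = τ w := by
    intro w
    have h1 : σ (sec (σ w)) = σ w := by
      have := congrArg (fun (F : ↥R →ₗ[ℂ] ↥R) => F (σ w)) hsec
      exact this
    have h2 : ψ (sec (σ w)) = ψ w := congrArg Subtype.val h1
    have h3 : sec (σ w) - w ∈ ker ψ := by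
      rw [LinearMap.mem_ker, map_sub, h2, sub_self]
    have h4 : sec (σ w) - w ∈ ker φ := by rw [hkφ]; exact h3
    have h5 : φ (sec (σ w)) = φ w := by
      rw [LinearMap.mem_ker, map_sub, sub_eq_zero] at h4
      exact h4
    exact Subtype.ext h5
  have hρ₀inj : Function.Injective ρ₀ := by
    rw [← LinearMap.ker_eq_bot, eq_bot_iff]
    intro r hr
    rw [LinearMap.mem_ker] at hr
    have h1 : φ (sec r) = 0 := congrArg Subtype.val hr
    have h2 : sec r ∈ ker ψ := by rw [← hkφ]; exact h1
    have h3 : σ (sec r) = 0 := (hσker _).mpr h2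
    have h4 : σ (sec r) = r := congrArg (fun (F : ↥R →ₗ[ℂ] ↥R) => F r) hsec
    rw [h4] at h3
    simp [h3]
  set ρ := LinearEquiv.ofBijective ρ₀
    ⟨hρ₀inj, LinearMap.injective_iff_surjective.mp hρ₀inj⟩ with hρdef
  -- adapted complement
  obtain ⟨C, hRC, hadapt⟩ := adaptedCompl s (fun j => ker (dcomp x s j))
    (fun i hi => ker_dcomp_mono x (by omega) (by omega)) R
  set b := glue2 hRC.symm hRC.disjoint.symm (LinearEquiv.refl ℂ _) ρ with hbdef
  have hbR : ∀ (w : E (s+1)), b (ψ w) = φ w := by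
    intro w
    have hmem : ψ w ∈ R := LinearMap.mem_range_self ψ w
    rw [hbdef, glue2_apply_right hRC.symm hRC.disjoint.symm _ _ hmem]
    have hsub : (⟨ψ w, hmem⟩ : ↥R) = σ w := rfl
    rw [hsub]
    show ((ρ (σ w)) : E s) = φ w
    rw [hρdef]
    show ((ρ₀ (σ w)) : E s) = φ w
    rw [key1 w]
    rfl
  have hbC : ∀ v ∈ C, b v = v := by
    intro v hv
    rw [hbdef, glue2_apply_left hRC.symm hRC.disjoint.symm _ _ hv]
    rfl
  refine ⟨b, ?_, ?_⟩
  · ext w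
    show b (ψ w) = ψ (a w)
    rw [hbR w]
    rfl
  · intro j hj
    apply mapEq_of_pointwise
    intro v hv
    have hsplit := hadapt j hj hv
    obtain ⟨u, hu, w, hw, rfl⟩ := Submodule.mem_sup.mp hsplit
    rw [map_add]
    apply Submodule.add_mem
    · -- u ∈ ker (dcomp x s j) ⊓ R
      obtain ⟨w', rfl⟩ : ∃ w', ψ w' = u := hu.2
      rw [hbR w']
      have hw'ker : w' ∈ ker (dcomp x (s+1) j) := by
        rw [hdc j hj, LinearMap.mem_ker, LinearMap.comp_apply]
        exact hu.1
      have haw' : a w' ∈ ker (dcomp x (s+1) j) := by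
        rw [← ha j (by omega)]
        exact Submodule.mem_map_of_mem hw'ker
      rw [hdc j hj, LinearMap.mem_ker, LinearMap.comp_apply] at haw'
      exact haw'
    · rw [hbC w hw.2]
      exact hw.1

/-- S2: extend an automorphism preserving all kernels of the chain to a chain automorphism. -/
lemma extendChainAuto (x : ∀ i : ℕ, E (i + 1) →ₗ[ℂ] E i) :
    ∀ (m : ℕ) (a : E m ≃ₗ[ℂ] E m),
    (∀ j ≤ m, (ker (dcomp x m j)).map (a : E m →ₗ[ℂ] E m) = ker (dcomp x m j)) →
    ∃ A : ∀ i, E i ≃ₗ[ℂ] E i, A m = a ∧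
      ∀ i < m, (A i).toLinearMap ∘ₗ x i = x i ∘ₗ (A (i+1)).toLinearMap := by
  intro m
  induction m with
  | zero =>
    intro a _
    exact ⟨fun i => Nat.casesOn i a (fun _ => LinearEquiv.refl ℂ _), rfl,
      fun i hi => absurd hi (by omega)⟩
  | succ m ih =>
    intro a ha
    obtain ⟨b, hbx, hbflag⟩ := oneStep x m a ha
    obtain ⟨A, hAm, hAint⟩ := ih b hbflag
    refine ⟨fun i => if h : i = m + 1 then h ▸ a else A i, ?_, ?_⟩
    · show (if h : m + 1 = m + 1 then h ▸ a else A (m+1)) = a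
      exact dif_pos rfl
    · intro i hi
      have hi1 : i ≠ m + 1 := by omega
      show (↑(if h : i = m + 1 then h ▸ a else A i) : E i →ₗ[ℂ] E i) ∘ₗ x i
          = x i ∘ₗ (↑(if h : i + 1 = m + 1 then h ▸ a else A (i+1)) : E (i+1) →ₗ[ℂ] E (i+1))
      by_cases h2 : i = m
      · subst h2
        rw [dif_neg hi1, dif_pos rfl, hAm]
        exact hbx
      · have h3 : i + 1 ≠ m + 1 := by omega
        rw [dif_neg hi1, dif_neg h3]
        exact hAint i (by omega)


/-- T: orbit classification for a map into the top of a chain. -/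
lemma mainT (x : ∀ i : ℕ, E (i + 1) →ₗ[ℂ] E i) (m : ℕ)
    {W : Type*} [AddCommGroup W] [Module ℂ W] [FiniteDimensional ℂ W]
    (f g : W →ₗ[ℂ] E m)
    (hr : ∀ j ≤ m, finrank ℂ (range (dcomp x m j ∘ₗ f))
      = finrank ℂ (range (dcomp x m j ∘ₗ g))) :
    ∃ (A : ∀ i, E i ≃ₗ[ℂ] E i) (b : W ≃ₗ[ℂ] W),
      (∀ i < m, (A i).toLinearMap ∘ₗ x i = x i ∘ₗ (A (i+1)).toLinearMap) ∧
      (A m).toLinearMap ∘ₗ f = g ∘ₗ b.toLinearMap := by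
  have hfg : finrank ℂ (range f) = finrank ℂ (range g) := by
    have h0 := hr m le_rfl
    rwa [dcomp_self, LinearMap.id_comp, LinearMap.id_comp] at h0
  have hinf : ∀ j ≤ m, finrank ℂ ((range f) ⊓ ker (dcomp x m j) : Submodule ℂ (E m))
      = finrank ℂ ((range g) ⊓ ker (dcomp x m j) : Submodule ℂ (E m)) := by
    intro j hj
    have h1 := rank_comp_add f (dcomp x m j)
    have h2 := rank_comp_add g (dcomp x m j)
    have h3 := hr j hj
    omega
  set NN : ℕ → Submodule ℂ (E m) :=
    fun t => if t ≤ m then ker (dcomp x m (m - t)) else ⊤ with hNN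
  have hmono : ∀ i, i < m + 1 → NN i ≤ NN (i+1) := by
    intro i hi
    by_cases h1 : i + 1 ≤ m
    · rw [hNN]
      simp only [if_pos (by omega : i ≤ m), if_pos h1]
      exact ker_dcomp_mono x (by omega) (by omega)
    · rw [hNN]
      simp only [if_pos (by omega : i ≤ m), if_neg h1]
      exact le_top
  have hNtop : NN (m+1) = ⊤ := by rw [hNN]; simp
  have hcond : ∀ t ≤ m + 1, finrank ℂ ((range f) ⊓ NN t : Submodule ℂ (E m))
      = finrank ℂ ((range g) ⊓ NN t : Submodule ℂ (E m)) := by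
    intro t ht
    by_cases h1 : t ≤ m
    · have he : NN t = ker (dcomp x m (m - t)) := by
        rw [hNN]
        simp only [if_pos h1]
      rw [he]
      exact hinf (m - t) (by omega)
    · have he : NN t = ⊤ := by
        rw [hNN]
        simp only [if_neg h1]
      rw [he, inf_top_eq, inf_top_eq]
      exact hfg
  obtain ⟨a, hmapPQ, hdiffa, hflag⟩ := flagMove (m+1) NN hmono (range f) (range g)
    (by rw [hNtop]; exact le_top) (by rw [hNtop]; exact le_top) hcond
  have hkerpres : ∀ j ≤ m,
      (ker (dcomp x m j)).map (a : E m →ₗ[ℂ] E m) = ker (dcomp x m j) := by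
    intro j hj
    have h4 := hflag (m - j) (by omega)
    have he : NN (m - j) = ker (dcomp x m j) := by
      rw [hNN]
      simp only [if_pos (by omega : m - j ≤ m)]
      rw [show m - (m - j) = j by omega]
    rwa [he] at h4
  obtain ⟨A, hAm, hAint⟩ := extendChainAuto x m a hkerpres
  have hrange : range ((a : E m →ₗ[ℂ] E m) ∘ₗ f) = range g := by
    rw [LinearMap.range_comp]
    exact hmapPQ
  obtain ⟨b, hb⟩ := factorEquiv ((a : E m →ₗ[ℂ] E m) ∘ₗ f) g hrange
  refine ⟨A, b, hAint, ?_⟩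
  rw [hAm]
  exact hb

/-- backward direction of the main theorem -/
lemma backward (k : ℕ) (x y : ∀ i : ℕ, E (i + 1) →ₗ[ℂ] E i)
    (HR : ∀ d j : ℕ, 0 < d → j + d ≤ k →
        finrank ℂ (range (compChain x d j)) = finrank ℂ (range (compChain y d j))) :
    ∃ h : ∀ i : ℕ, E i ≃ₗ[ℂ] E i, ∀ i : ℕ, i < k →
        y i = (h i).toLinearMap ∘ₗ x i ∘ₗ (h (i + 1)).symm.toLinearMap := by
  induction k with
  | zero => exact ⟨fun _ => LinearEquiv.refl ℂ _, fun i hi => absurd hi (by omega)⟩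
  | succ n ih =>
    obtain ⟨h, hcomm⟩ := ih (fun d j hd hjd => HR d j hd (by omega))
    have hint : ∀ i < n, (h i).toLinearMap ∘ₗ x i = y i ∘ₗ (h (i+1)).toLinearMap := by
      intro i hi
      rw [hcomm i hi]
      ext v
      simp
    set f : E (n+1) →ₗ[ℂ] E n := (h n).toLinearMap ∘ₗ x n with hfdef
    have hTr : ∀ j ≤ n, finrank ℂ (range (dcomp y n j ∘ₗ f))
        = finrank ℂ (range (dcomp y n j ∘ₗ y n)) := by
      intro j hj
      have hL : dcomp y n j ∘ₗ f = (h j).toLinearMap ∘ₗ dcomp x (n+1) j := by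
        rw [hfdef, ← LinearMap.comp_assoc, intertwine_dcomp hint n le_rfl j hj,
          LinearMap.comp_assoc, ← dcomp_succ x hj]
      have hRR : dcomp y n j ∘ₗ y n = dcomp y (n+1) j := (dcomp_succ y hj).symm
      rw [hL, hRR]
      have h1 : finrank ℂ (range ((h j).toLinearMap ∘ₗ dcomp x (n+1) j))
          = finrank ℂ (range (dcomp x (n+1) j)) := by
        rw [LinearMap.range_comp]
        exact LinearEquiv.finrank_map_eq _ _
      rw [h1]
      obtain ⟨d, hd⟩ : ∃ d, n + 1 = j + d := ⟨n + 1 - j, by omega⟩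
      rw [hd, dcomp_eq_compChain x j d, dcomp_eq_compChain y j d]
      exact HR d j (by omega) (by omega)
    obtain ⟨A, b, hAint, hAfb⟩ := mainT y n f (y n) hTr
    have hintA : ∀ i < n, (A i).toLinearMap ∘ₗ y i = y i ∘ₗ (A (i+1)).toLinearMap :=
      fun i hi => hAint i hi
    refine ⟨fun i => if hin : i ≤ n then (h i).trans (A i)
      else if hin2 : i = n + 1 then hin2 ▸ b else LinearEquiv.refl ℂ _, ?_⟩
    intro i hi
    show y i = (↑(if hin : i ≤ n then (h i).trans (A i)
        else if hin2 : i = n + 1 then hin2 ▸ b else LinearEquiv.refl ℂ _) : E i →ₗ[ℂ] E i)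
      ∘ₗ x i ∘ₗ (↑((if hin : i + 1 ≤ n then (h (i+1)).trans (A (i+1))
        else if hin2 : i + 1 = n + 1 then hin2 ▸ b else LinearEquiv.refl ℂ _).symm)
          : E (i+1) →ₗ[ℂ] E (i+1))
    by_cases h2 : i = n
    · subst h2
      rw [dif_pos (le_refl i), dif_neg (by omega : ¬ i + 1 ≤ i), dif_pos rfl]
      have h4 : ∀ w, (A i) ((h i) (x i w)) = y i (b w) := by
        intro w
        exact congrArg (fun (F : E (i+1) →ₗ[ℂ] E i) => F w) hAfb
      ext v
      show y i v = ((h i).trans (A i)) (x i (b.symm v))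
      rw [show ((h i).trans (A i)) (x i (b.symm v)) = (A i) ((h i) (x i (b.symm v))) from rfl,
        h4 (b.symm v), b.apply_symm_apply]
    · have h3 : i < n := by omega
      rw [dif_pos (by omega : i ≤ n), dif_pos (by omega : i + 1 ≤ n)]
      have h4 : ∀ w, (h i) (x i w) = y i ((h (i+1)) w) := by
        intro w
        exact congrArg (fun (F : E (i+1) →ₗ[ℂ] E i) => F w) (hint i h3)
      have h5 : ∀ w, (A i) (y i w) = y i ((A (i+1)) w) := by
        intro w
        exact congrArg (fun (F : E (i+1) →ₗ[ℂ] E i) => F w) (hintA i h3)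
      ext v
      show y i v = ((h i).trans (A i)) (x i (((h (i+1)).trans (A (i+1))).symm v))
      rw [show ((h i).trans (A i)) (x i (((h (i+1)).trans (A (i+1))).symm v))
          = (A i) ((h i) (x i ((h (i+1)).symm ((A (i+1)).symm v)))) from rfl,
        h4 _, (h (i+1)).apply_symm_apply, h5 _, (A (i+1)).apply_symm_apply]

end ChainFD

end Chain

end Stmt15


/-- Two tuples `x, y` of linear maps `x_i : E_i → E_{i-1}` (`1 ≤ i ≤ k`) lie in the same
orbit of `H = GL(E_0) × ⋯ × GL(E_k)` acting by
`(h_0, …, h_k) · (x_1, …, x_k) = (h_0 x_1 h_1⁻¹, …, h_{k-1} x_k h_k⁻¹)` if and only if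
all the composites `x_{i j} = x_{j+1} ∘ ⋯ ∘ x_i` and `y_{i j}` have equal ranks. -/
theorem stmt15 (k : ℕ) (E : ℕ → Type*) [∀ i, AddCommGroup (E i)] [∀ i, Module ℂ (E i)]
    [∀ i, FiniteDimensional ℂ (E i)]
    (x y : ∀ i : ℕ, E (i + 1) →ₗ[ℂ] E i) :
    (∃ h : ∀ i : ℕ, E i ≃ₗ[ℂ] E i, ∀ i : ℕ, i < k →
        y i = (h i).toLinearMap ∘ₗ x i ∘ₗ (h (i + 1)).symm.toLinearMap) ↔
      ∀ d j : ℕ, 0 < d → j + d ≤ k →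
        Module.finrank ℂ (LinearMap.range (compChain x d j)) =
          Module.finrank ℂ (LinearMap.range (compChain y d j)) := by
  constructor
  · rintro ⟨h, hcomm⟩ d j hd hjd
    have hint : ∀ i < k, (h i).toLinearMap ∘ₗ x i = y i ∘ₗ (h (i+1)).toLinearMap := by
      intro i hi
      rw [hcomm i hi]
      ext v
      simp
    have hI := Stmt15.intertwine_dcomp hint (j + d) hjd j (by omega)
    rw [← Stmt15.dcomp_eq_compChain x j d, ← Stmt15.dcomp_eq_compChain y j d]
    have h1 : LinearMap.range (Stmt15.dcomp y (j+d) j)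
        = LinearMap.range (Stmt15.dcomp y (j+d) j ∘ₗ (h (j+d)).toLinearMap) := by
      rw [LinearMap.range_comp_of_range_eq_top]
      exact (h (j+d)).range
    rw [h1, hI, LinearMap.range_comp]
    exact (LinearEquiv.finrank_map_eq _ _).symm
  · exact Stmt15.backward k x y
end
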